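/- arXiv:2305.16152 — 6 statements merged into one kernel-verified Lean document; each statement's English description precedes it below -/
import Mathlib

section
/- Let g ∈ ℝ be arbitrary and let (c_{n+1})_{0≤n<N} be any process with c_{n+1} : Ω → ℝ^d being 𝓕_n-measurable and E[(c_{n+1}·ΔS̃_{n+1})²] < ∞ for every n < N. Then the residual of M after subtracting the martingale transform with the optimal controls is orthogonal in L²(Q) to every such martingale transform of S̃: E[(M_N − M_0 − ∑_{n=0}^{N−1} α*_{n+1}·ΔS̃_{n+1})·(g + ∑_{n=0}^{N−1} c_{n+1}·ΔS̃_{n+1})] = 0. In particular, M_0 + ∑_{n<N} α*_{n+1}·ΔS̃_{n+1} is the L²(Q)-orthogonal projection of M_N onto the space of terminal values h + ∑_{n<N} ν_{n+1}·ΔS̃_{n+1} of martingale transforms of S̃. -/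
open MeasureTheory ProbabilityTheory Finset

/-- Conditional covariance matrix `Σ_n = E[ΔS̃_{n+1} (ΔS̃_{n+1})ᵀ | 𝓕_n]` of the increments of
the discounted assets, defined entrywise via real-valued conditional expectations. -/
noncomputable def condCovMatrix {Ω : Type*} [MeasurableSpace Ω] (P : Measure Ω) {d : ℕ}
    (ℱ : ℕ → MeasurableSpace Ω) (S : ℕ → Ω → Fin d → ℝ) (n : ℕ) (ω : Ω) :
    Matrix (Fin d) (Fin d) ℝ :=
  Matrix.of fun i j =>
    (P[fun ω' => (S (n + 1) ω' i - S n ω' i) * (S (n + 1) ω' j - S n ω' j) | ℱ n]) ω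

/-- The vector `E[ΔM_{n+1} ΔS̃_{n+1} | 𝓕_n]`, defined entrywise. -/
noncomputable def condMSVec {Ω : Type*} [MeasurableSpace Ω] (P : Measure Ω) {d : ℕ}
    (ℱ : ℕ → MeasurableSpace Ω) (S : ℕ → Ω → Fin d → ℝ) (M : ℕ → Ω → ℝ) (n : ℕ) (ω : Ω) :
    Fin d → ℝ :=
  fun i => (P[fun ω' => (M (n + 1) ω' - M n ω') * (S (n + 1) ω' i - S n ω' i) | ℱ n]) ω

/-- The optimal controls `α*_{n+1} = Σ_n⁻¹ · E[ΔM_{n+1} ΔS̃_{n+1} | 𝓕_n]`. -/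
noncomputable def alphaStar {Ω : Type*} [MeasurableSpace Ω] (P : Measure Ω) {d : ℕ}
    (ℱ : ℕ → MeasurableSpace Ω) (S : ℕ → Ω → Fin d → ℝ) (M : ℕ → Ω → ℝ) (n : ℕ) (ω : Ω) :
    Fin d → ℝ :=
  (condCovMatrix P ℱ S n ω)⁻¹.mulVec (condMSVec P ℱ S M n ω)


section StmtAux
open Filter Topology
namespace StmtAux

variable {Ω : Type*} [m0 : MeasurableSpace Ω] (P : Measure Ω) [IsProbabilityMeasure P]

lemma int_mul {f g : Ω → ℝ} (hf : MemLp f 2 P) (hg : MemLp g 2 P) :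
    Integrable (fun ω => f ω * g ω) P := by
  have h : MemLp (f • g) 1 P := MemLp.smul (r := 1) hg hf
  have h2 : (f • g) = fun ω => f ω * g ω := rfl
  rw [h2] at h
  exact memLp_one_iff_integrable.mp h

lemma integral_mul_condexp {m : MeasurableSpace Ω} (hm : m ≤ m0) {φ W : Ω → ℝ}
    (hφ : StronglyMeasurable[m] φ) (hW : Integrable W P)
    (hφW : Integrable (fun ω => φ ω * W ω) P) :
    ∫ ω, φ ω * W ω ∂P = ∫ ω, φ ω * (P[W|m]) ω ∂P := by
  have h1 : ∫ ω, (P[fun ω => φ ω * W ω|m]) ω ∂P = ∫ ω, φ ω * W ω ∂P :=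
    integral_condExp hm
  rw [← h1]
  refine integral_congr_ae ?_
  have h2 : P[φ * W|m] =ᵐ[P] φ * P[W|m] :=
    condExp_mul_of_stronglyMeasurable_left hφ hφW hW
  exact h2

lemma integral_mul_eq_zero {m : MeasurableSpace Ω} (hm : m ≤ m0) {φ W : Ω → ℝ}
    (hφ : StronglyMeasurable[m] φ) (hW : Integrable W P)
    (hW0 : (P[W|m]) =ᵐ[P] 0)
    (hφW : Integrable (fun ω => φ ω * W ω) P) :
    ∫ ω, φ ω * W ω ∂P = 0 := by
  rw [integral_mul_condexp (m0 := m0) P hm hφ hW hφW]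
  have h : (fun ω => φ ω * (P[W|m]) ω) =ᵐ[P] (fun _ => (0:ℝ)) := by
    filter_upwards [hW0] with ω h
    simp [h]
  rw [integral_congr_ae h, integral_zero]

lemma integral_eq_zero_of_indicator {f : Ω → ℝ} (hf : Integrable f P) (A : ℕ → Set Ω)
    (hAm : ∀ K, MeasurableSet (A K)) (hmem : ∀ ω, ∃ K0, ∀ K ≥ K0, ω ∈ A K)
    (hkey : ∀ K, ∫ ω, (A K).indicator f ω ∂P = 0) : ∫ ω, f ω ∂P = 0 := by
  have hconv : Tendsto (fun K : ℕ => ∫ ω, (A K).indicator f ω ∂P) atTop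
      (𝓝 (∫ ω, f ω ∂P)) := by
    refine tendsto_integral_of_dominated_convergence (fun ω => |f ω|)
      (fun K => hf.1.indicator (hAm K)) hf.abs ?_ ?_
    · intro K
      refine Eventually.of_forall fun ω => ?_
      by_cases h : ω ∈ A K
      · simp [Set.indicator_of_mem h, Real.norm_eq_abs]
      · simp [Set.indicator_of_notMem h, abs_nonneg]
    · refine Eventually.of_forall fun ω => ?_
      obtain ⟨K0, hK0⟩ := hmem ω
      refine tendsto_atTop_of_eventually_const (i₀ := K0) fun K hK => ?_
      rw [Set.indicator_of_mem (hK0 K hK)]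
  simp_rw [hkey] at hconv
  exact (tendsto_nhds_unique hconv tendsto_const_nhds)

lemma measurable_det {m : MeasurableSpace Ω} {d : ℕ} {A : Ω → Matrix (Fin d) (Fin d) ℝ}
    (h : ∀ i j, Measurable[m] fun ω => A ω i j) :
    Measurable[m] fun ω => (A ω).det := by
  simp only [Matrix.det_apply, Units.smul_def, zsmul_eq_mul]
  exact Finset.measurable_sum _ fun σ _ =>
    (Finset.measurable_prod _ fun i _ => h (σ i) i).const_mul _

lemma measurable_adjugate {m : MeasurableSpace Ω} {d : ℕ} {A : Ω → Matrix (Fin d) (Fin d) ℝ}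
    (h : ∀ i j, Measurable[m] fun ω => A ω i j) (i j : Fin d) :
    Measurable[m] fun ω => (A ω).adjugate i j := by
  simp only [Matrix.adjugate_apply]
  refine measurable_det fun k l => ?_
  simp only [Matrix.updateRow_apply]
  by_cases hkj : k = j
  · simp [hkj]
  · simp only [hkj, if_false]
    exact h k l

lemma measurable_inv_entry {m : MeasurableSpace Ω} {d : ℕ} {A : Ω → Matrix (Fin d) (Fin d) ℝ}
    (h : ∀ i j, Measurable[m] fun ω => A ω i j) (i j : Fin d) :
    Measurable[m] fun ω => (A ω)⁻¹ i j := by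
  have he : ∀ ω, (A ω)⁻¹ i j = ((A ω).det)⁻¹ * (A ω).adjugate i j := by
    intro ω
    rw [Matrix.inv_def, Matrix.smul_apply, Ring.inverse_eq_inv, smul_eq_mul]
  simp only [he]
  exact ((measurable_det h).inv).mul (measurable_adjugate h i j)



lemma lemA {d : ℕ} {m : MeasurableSpace Ω} (hm : m ≤ m0)
    (ΔS : Ω → Fin d → ℝ) (hΔS2 : ∀ i, MemLp (fun ω => ΔS ω i) 2 P)
    (hΔS0 : ∀ i, (P[fun ω => ΔS ω i|m]) =ᵐ[P] 0)
    (U : Ω → ℝ) (hUm : StronglyMeasurable[m] U) (hU2 : MemLp U 2 P)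
    (b : Ω → Fin d → ℝ) (hbm : ∀ i, StronglyMeasurable[m] fun ω => b ω i)
    (hZ2 : MemLp (fun ω => ∑ i, b ω i * ΔS ω i) 2 P) :
    ∫ ω, U ω * ∑ i, b ω i * ΔS ω i ∂P = 0 := by
  set Z : Ω → ℝ := fun ω => ∑ i, b ω i * ΔS ω i with hZdef
  set A : ℕ → Set Ω := fun K => {ω | |U ω| ≤ K ∧ ∀ i, |b ω i| ≤ K} with hAdef
  have hAm : ∀ K, MeasurableSet[m] (A K) := by
    intro K
    have : A K = {ω | |U ω| ≤ (K:ℝ)} ∩ ⋂ i, {ω | |b ω i| ≤ (K:ℝ)} := by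
      ext ω; simp [hAdef, Set.mem_iInter]
    rw [this]
    exact (measurableSet_le hUm.measurable.abs (measurable_const : Measurable[m] fun _ => (K:ℝ))).inter
      (MeasurableSet.iInter fun i =>
        measurableSet_le (hbm i).measurable.abs (measurable_const : Measurable[m] fun _ => (K:ℝ)))
  have hmem : ∀ ω, ∃ K0 : ℕ, ∀ K ≥ K0, ω ∈ A K := by
    intro ω
    obtain ⟨K0, hK0⟩ := exists_nat_ge (|U ω| + ∑ i, |b ω i|)
    refine ⟨K0, fun K hK => ?_⟩
    have hcast : (K0:ℝ) ≤ K := Nat.cast_le.mpr hK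
    have hsum : (0:ℝ) ≤ ∑ i, |b ω i| := Finset.sum_nonneg fun i _ => abs_nonneg _
    constructor
    · linarith
    · intro i
      have h1 : |b ω i| ≤ ∑ j, |b ω j| :=
        Finset.single_le_sum (fun j _ => abs_nonneg (b ω j)) (Finset.mem_univ i)
      have h2 : (0:ℝ) ≤ |U ω| := abs_nonneg _
      linarith
  have hUZ : Integrable (fun ω => U ω * Z ω) P := int_mul (m0 := m0) P hU2 hZ2
  refine integral_eq_zero_of_indicator (m0 := m0) P hUZ A (fun K => hm _ (hAm K)) hmem ?_
  intro K
  have hφm : ∀ i : Fin d, StronglyMeasurable[m]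
      ((A K).indicator (fun ω => U ω * b ω i)) :=
    fun i => (hUm.mul (hbm i)).indicator (hAm K)
  have hφbd : ∀ (i : Fin d) (ω : Ω),
      ‖(A K).indicator (fun ω => U ω * b ω i) ω‖ ≤ (K:ℝ) * K := by
    intro i ω
    by_cases h : ω ∈ A K
    · rw [Set.indicator_of_mem h]
      rw [Real.norm_eq_abs, abs_mul]
      exact mul_le_mul h.1 (h.2 i) (abs_nonneg _) (Nat.cast_nonneg K)
    · rw [Set.indicator_of_notMem h]
      simp
      positivity
  have hint : ∀ i : Fin d,
      Integrable (fun ω => (A K).indicator (fun ω => U ω * b ω i) ω * ΔS ω i) P := by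
    intro i
    exact Integrable.bdd_mul ((hΔS2 i).integrable one_le_two)
      (((hφm i).mono hm).aestronglyMeasurable) (Eventually.of_forall (hφbd i))
  have hpt : ∀ ω, (A K).indicator (fun ω => U ω * Z ω) ω
      = ∑ i, (A K).indicator (fun ω => U ω * b ω i) ω * ΔS ω i := by
    intro ω
    by_cases h : ω ∈ A K
    · rw [Set.indicator_of_mem h]
      simp only [hZdef, Finset.mul_sum]
      refine Finset.sum_congr rfl fun i _ => ?_
      rw [Set.indicator_of_mem h]
      ring
    · rw [Set.indicator_of_notMem h]
      symm
      refine Finset.sum_eq_zero fun i _ => ?_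
      rw [Set.indicator_of_notMem h, zero_mul]
  calc ∫ ω, (A K).indicator (fun ω => U ω * Z ω) ω ∂P
      = ∫ ω, ∑ i, (A K).indicator (fun ω => U ω * b ω i) ω * ΔS ω i ∂P :=
        integral_congr_ae (Eventually.of_forall hpt)
    _ = ∑ i, ∫ ω, (A K).indicator (fun ω => U ω * b ω i) ω * ΔS ω i ∂P :=
        integral_finset_sum _ fun i _ => hint i
    _ = 0 := by
        refine Finset.sum_eq_zero fun i _ => ?_
        exact integral_mul_eq_zero (m0 := m0) P hm (hφm i)
          ((hΔS2 i).integrable one_le_two) (hΔS0 i) (hint i)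

lemma sm_alphaStar {d : ℕ} (ℱ : ℕ → MeasurableSpace Ω) (S : ℕ → Ω → Fin d → ℝ)
    (M : ℕ → Ω → ℝ) (n : ℕ) (j : Fin d) :
    StronglyMeasurable[ℱ n] fun ω => alphaStar P ℱ S M n ω j := by
  have hSig : ∀ i k, Measurable[ℱ n] fun ω => condCovMatrix P ℱ S n ω i k := fun i k =>
    stronglyMeasurable_condExp.measurable
  have hV : ∀ i, Measurable[ℱ n] fun ω => condMSVec P ℱ S M n ω i := fun i =>
    stronglyMeasurable_condExp.measurable
  have hinvm : ∀ i k, Measurable[ℱ n] fun ω => (condCovMatrix P ℱ S n ω)⁻¹ i k :=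
    measurable_inv_entry hSig
  have he : ∀ ω, alphaStar P ℱ S M n ω j
      = ∑ k, (condCovMatrix P ℱ S n ω)⁻¹ j k * condMSVec P ℱ S M n ω k := by
    intro ω
    simp [alphaStar, Matrix.mulVec, dotProduct]
  simp only [he]
  exact Measurable.stronglyMeasurable
    (Finset.measurable_sum _ fun k _ => (hinvm j k).mul (hV k))

lemma condexp_diff_zero {m : MeasurableSpace Ω} (hm : m ≤ m0) {f g : Ω → ℝ}
    (hfi : Integrable f P) (hgi : Integrable g P) (hgm : StronglyMeasurable[m] g)
    (hmart : (P[f|m]) =ᵐ[P] g) :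
    (P[fun ω => f ω - g ω|m]) =ᵐ[P] 0 := by
  have h1 : P[f - g|m] =ᵐ[P] P[f|m] - P[g|m] := condExp_sub hfi hgi m
  have h2 : P[g|m] = g := condExp_of_stronglyMeasurable hm hgm hgi
  have h3 : (fun ω => f ω - g ω) = f - g := rfl
  rw [h3]
  filter_upwards [h1, hmart] with ω e1 e3
  rw [e1, Pi.sub_apply, h2, e3]
  simp

lemma lemD {d : ℕ} (ℱ : ℕ → MeasurableSpace Ω) (S : ℕ → Ω → Fin d → ℝ) (M : ℕ → Ω → ℝ)
    (n : ℕ) (hm : ℱ n ≤ m0)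
    (hΔS2 : ∀ i, MemLp (fun ω => S (n+1) ω i - S n ω i) 2 P)
    (hD2 : MemLp (fun ω => M (n+1) ω - M n ω) 2 P)
    (hinv : ∀ᵐ ω ∂P, IsUnit (condCovMatrix P ℱ S n ω))
    (hX2 : MemLp (fun ω => ∑ i, alphaStar P ℱ S M n ω i * (S (n+1) ω i - S n ω i)) 2 P)
    (b : Ω → Fin d → ℝ) (hbm : ∀ i, StronglyMeasurable[ℱ n] fun ω => b ω i)
    (hY2 : MemLp (fun ω => ∑ i, b ω i * (S (n+1) ω i - S n ω i)) 2 P) :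
    ∫ ω, (M (n+1) ω - M n ω - ∑ i, alphaStar P ℱ S M n ω i * (S (n+1) ω i - S n ω i))
        * (∑ i, b ω i * (S (n+1) ω i - S n ω i)) ∂P = 0 := by
  have ham : ∀ j, StronglyMeasurable[ℱ n] fun ω => alphaStar P ℱ S M n ω j :=
    sm_alphaStar P ℱ S M n
  have hR2 : MemLp (fun ω => M (n+1) ω - M n ω
      - ∑ i, alphaStar P ℱ S M n ω i * (S (n+1) ω i - S n ω i)) 2 P := hD2.sub hX2
  have hRY : Integrable (fun ω =>
      (M (n+1) ω - M n ω - ∑ i, alphaStar P ℱ S M n ω i * (S (n+1) ω i - S n ω i))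
        * (∑ i, b ω i * (S (n+1) ω i - S n ω i))) P := int_mul P hR2 hY2
  set A : ℕ → Set Ω := fun K =>
    {ω | (∀ j, |alphaStar P ℱ S M n ω j| ≤ K) ∧ ∀ i, |b ω i| ≤ K} with hAdef
  have hAm : ∀ K, MeasurableSet[ℱ n] (A K) := by
    intro K
    have : A K = (⋂ j, {ω | |alphaStar P ℱ S M n ω j| ≤ (K:ℝ)})
        ∩ ⋂ i, {ω | |b ω i| ≤ (K:ℝ)} := by
      ext ω; simp [hAdef, Set.mem_iInter]
    rw [this]
    exact (MeasurableSet.iInter fun j =>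
        (measurable_abs.comp (ham j).measurable (measurableSet_Iic (a := (K:ℝ))) : MeasurableSet[ℱ n] _)).inter
      (MeasurableSet.iInter fun i =>
        (measurable_abs.comp (hbm i).measurable (measurableSet_Iic (a := (K:ℝ))) : MeasurableSet[ℱ n] _))
  have hmem : ∀ ω, ∃ K0 : ℕ, ∀ K ≥ K0, ω ∈ A K := by
    intro ω
    obtain ⟨K0, hK0⟩ :=
      exists_nat_ge ((∑ j, |alphaStar P ℱ S M n ω j|) + ∑ i, |b ω i|)
    refine ⟨K0, fun K hK => ?_⟩
    have hcast : (K0:ℝ) ≤ K := Nat.cast_le.mpr hK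
    have hs1 : (0:ℝ) ≤ ∑ j, |alphaStar P ℱ S M n ω j| :=
      Finset.sum_nonneg fun j _ => abs_nonneg _
    have hs2 : (0:ℝ) ≤ ∑ i, |b ω i| := Finset.sum_nonneg fun i _ => abs_nonneg _
    constructor
    · intro j
      have h1 : |alphaStar P ℱ S M n ω j| ≤ ∑ j', |alphaStar P ℱ S M n ω j'| :=
        Finset.single_le_sum (f := fun j' => |alphaStar P ℱ S M n ω j'|)
          (fun j' _ => abs_nonneg _) (Finset.mem_univ j)
      linarith
    · intro i
      have h1 : |b ω i| ≤ ∑ i', |b ω i'| :=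
        Finset.single_le_sum (f := fun i' => |b ω i'|)
          (fun i' _ => abs_nonneg _) (Finset.mem_univ i)
      linarith
  refine integral_eq_zero_of_indicator P hRY A (fun K => hm _ (hAm K)) hmem ?_
  intro K
  have hφm : ∀ i : Fin d, StronglyMeasurable[ℱ n] ((A K).indicator (fun ω => b ω i)) :=
    fun i => (hbm i).indicator (hAm K)
  have hψm : ∀ i j : Fin d, StronglyMeasurable[ℱ n]
      ((A K).indicator (fun ω => b ω i * alphaStar P ℱ S M n ω j)) :=
    fun i j => ((hbm i).mul (ham j)).indicator (hAm K)
  have hφbd : ∀ (i : Fin d) (ω : Ω), ‖(A K).indicator (fun ω => b ω i) ω‖ ≤ (K:ℝ) := by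
    intro i ω
    by_cases h : ω ∈ A K
    · rw [Set.indicator_of_mem h, Real.norm_eq_abs]
      exact h.2 i
    · rw [Set.indicator_of_notMem h]
      simp
  have hψbd : ∀ (i j : Fin d) (ω : Ω),
      ‖(A K).indicator (fun ω => b ω i * alphaStar P ℱ S M n ω j) ω‖ ≤ (K:ℝ) * K := by
    intro i j ω
    by_cases h : ω ∈ A K
    · rw [Set.indicator_of_mem h, Real.norm_eq_abs, abs_mul]
      exact mul_le_mul (h.2 i) (h.1 j) (abs_nonneg _) (Nat.cast_nonneg K)
    · rw [Set.indicator_of_notMem h]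
      simp
      positivity
  have hintA : ∀ i : Fin d, Integrable (fun ω => (A K).indicator (fun ω => b ω i) ω
      * ((M (n+1) ω - M n ω) * (S (n+1) ω i - S n ω i))) P := fun i =>
    Integrable.bdd_mul (int_mul P hD2 (hΔS2 i))
      (((hφm i).mono hm).aestronglyMeasurable) (Eventually.of_forall (hφbd i))
  have hintB : ∀ i j : Fin d, Integrable (fun ω =>
      (A K).indicator (fun ω => b ω i * alphaStar P ℱ S M n ω j) ω
      * ((S (n+1) ω i - S n ω i) * (S (n+1) ω j - S n ω j))) P := fun i j =>
    Integrable.bdd_mul (int_mul P (hΔS2 i) (hΔS2 j))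
      (((hψm i j).mono hm).aestronglyMeasurable) (Eventually.of_forall (hψbd i j))
  have hintA' : ∀ i : Fin d, Integrable (fun ω => (A K).indicator (fun ω => b ω i) ω
      * condMSVec P ℱ S M n ω i) P := fun i =>
    Integrable.bdd_mul integrable_condExp
      (((hφm i).mono hm).aestronglyMeasurable) (Eventually.of_forall (hφbd i))
  have hintB' : ∀ i j : Fin d, Integrable (fun ω =>
      (A K).indicator (fun ω => b ω i * alphaStar P ℱ S M n ω j) ω
      * condCovMatrix P ℱ S n ω i j) P := fun i j =>
    Integrable.bdd_mul integrable_condExp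
      (((hψm i j).mono hm).aestronglyMeasurable) (Eventually.of_forall (hψbd i j))
  have hL : ∀ ω, (M (n+1) ω - M n ω
        - ∑ i, alphaStar P ℱ S M n ω i * (S (n+1) ω i - S n ω i))
        * (∑ i, b ω i * (S (n+1) ω i - S n ω i))
      = (∑ i, b ω i * ((M (n+1) ω - M n ω) * (S (n+1) ω i - S n ω i)))
        - ∑ i, ∑ j, (b ω i * alphaStar P ℱ S M n ω j)
            * ((S (n+1) ω i - S n ω i) * (S (n+1) ω j - S n ω j)) := by
    intro ω
    rw [sub_mul]
    congr 1
    · rw [Finset.mul_sum]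
      exact Finset.sum_congr rfl fun i _ => by ring
    · rw [Finset.sum_mul_sum, Finset.sum_comm]
      exact Finset.sum_congr rfl fun i _ => Finset.sum_congr rfl fun j _ => by ring
  have hpt : ∀ ω, (A K).indicator (fun ω => (M (n+1) ω - M n ω
        - ∑ i, alphaStar P ℱ S M n ω i * (S (n+1) ω i - S n ω i))
        * (∑ i, b ω i * (S (n+1) ω i - S n ω i))) ω
      = (∑ i, (A K).indicator (fun ω => b ω i) ω
            * ((M (n+1) ω - M n ω) * (S (n+1) ω i - S n ω i)))
        - ∑ i, ∑ j, (A K).indicator (fun ω => b ω i * alphaStar P ℱ S M n ω j) ω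
            * ((S (n+1) ω i - S n ω i) * (S (n+1) ω j - S n ω j)) := by
    intro ω
    by_cases h : ω ∈ A K
    · simp only [Set.indicator_of_mem h]
      exact hL ω
    · simp only [Set.indicator_of_notMem h]
      simp
  rw [integral_congr_ae (Eventually.of_forall hpt)]
  rw [integral_sub (integrable_finset_sum _ fun i _ => hintA i)
    (integrable_finset_sum _ fun i _ => integrable_finset_sum _ fun j _ => hintB i j)]
  rw [integral_finset_sum _ fun i _ => hintA i]
  rw [integral_finset_sum _ fun i _ => integrable_finset_sum _ fun j _ => hintB i j]
  have eA : ∀ i : Fin d, ∫ ω, (A K).indicator (fun ω => b ω i) ω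
        * ((M (n+1) ω - M n ω) * (S (n+1) ω i - S n ω i)) ∂P
      = ∫ ω, (A K).indicator (fun ω => b ω i) ω * condMSVec P ℱ S M n ω i ∂P := by
    intro i
    exact integral_mul_condexp P hm (hφm i) (int_mul P hD2 (hΔS2 i)) (hintA i)
  have eB : ∀ i j : Fin d, ∫ ω,
        (A K).indicator (fun ω => b ω i * alphaStar P ℱ S M n ω j) ω
        * ((S (n+1) ω i - S n ω i) * (S (n+1) ω j - S n ω j)) ∂P
      = ∫ ω, (A K).indicator (fun ω => b ω i * alphaStar P ℱ S M n ω j) ω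
        * condCovMatrix P ℱ S n ω i j ∂P := by
    intro i j
    exact integral_mul_condexp P hm (hψm i j) (int_mul P (hΔS2 i) (hΔS2 j)) (hintB i j)
  have eB' : ∀ i : Fin d, ∫ ω, ∑ j, (A K).indicator
        (fun ω => b ω i * alphaStar P ℱ S M n ω j) ω
        * ((S (n+1) ω i - S n ω i) * (S (n+1) ω j - S n ω j)) ∂P
      = ∫ ω, ∑ j, (A K).indicator (fun ω => b ω i * alphaStar P ℱ S M n ω j) ω
        * condCovMatrix P ℱ S n ω i j ∂P := by
    intro i
    rw [integral_finset_sum _ fun j _ => hintB i j,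
      integral_finset_sum _ fun j _ => hintB' i j]
    exact Finset.sum_congr rfl fun j _ => eB i j
  rw [Finset.sum_congr rfl fun i _ => eA i]
  rw [Finset.sum_congr rfl fun i _ => eB' i]
  rw [← integral_finset_sum _ fun i _ => hintA' i]
  rw [← integral_finset_sum _ fun i _ => integrable_finset_sum _ fun j _ => hintB' i j]
  rw [← integral_sub (integrable_finset_sum _ fun i _ => hintA' i)
    (integrable_finset_sum _ fun i _ => integrable_finset_sum _ fun j _ => hintB' i j)]
  have hz : (fun ω => (∑ i, (A K).indicator (fun ω => b ω i) ω * condMSVec P ℱ S M n ω i)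
      - ∑ i, ∑ j, (A K).indicator (fun ω => b ω i * alphaStar P ℱ S M n ω j) ω
          * condCovMatrix P ℱ S n ω i j) =ᵐ[P] (fun _ => (0:ℝ)) := by
    filter_upwards [hinv] with ω hu
    by_cases h : ω ∈ A K
    · simp only [Set.indicator_of_mem h]
      have hMV : (condCovMatrix P ℱ S n ω).mulVec (alphaStar P ℱ S M n ω)
          = condMSVec P ℱ S M n ω := by
        rw [alphaStar, Matrix.mulVec_mulVec,
          Matrix.mul_nonsing_inv _ ((Matrix.isUnit_iff_isUnit_det _).mp hu),
          Matrix.one_mulVec]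
      have h1 : ∀ i, ∑ j, (b ω i * alphaStar P ℱ S M n ω j) * condCovMatrix P ℱ S n ω i j
          = b ω i * condMSVec P ℱ S M n ω i := by
        intro i
        have h2 : ∑ j, condCovMatrix P ℱ S n ω i j * alphaStar P ℱ S M n ω j
            = condMSVec P ℱ S M n ω i := by
          have h3 := congrFun hMV i
          simpa [Matrix.mulVec, dotProduct] using h3
        calc ∑ j, (b ω i * alphaStar P ℱ S M n ω j) * condCovMatrix P ℱ S n ω i j
            = b ω i * ∑ j, condCovMatrix P ℱ S n ω i j * alphaStar P ℱ S M n ω j := by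
              rw [Finset.mul_sum]
              exact Finset.sum_congr rfl fun j _ => by ring
          _ = b ω i * condMSVec P ℱ S M n ω i := by rw [h2]
      rw [sub_eq_zero]
      exact (Finset.sum_congr rfl fun i _ => h1 i).symm
    · simp only [Set.indicator_of_notMem h]
      simp
  rw [integral_congr_ae hz, integral_zero]

lemma main_aux {N : ℕ} (R Y : ℕ → Ω → ℝ) (g : ℝ)
    (hR2 : ∀ n < N, MemLp (R n) 2 P) (hY2 : ∀ n < N, MemLp (Y n) 2 P)
    (hR0 : ∀ n < N, ∫ ω, R n ω ∂P = 0)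
    (hRY : ∀ m < N, ∀ n < N, ∫ ω, R m ω * Y n ω ∂P = 0) :
    ∫ ω, (∑ n ∈ Finset.range N, R n ω) * (g + ∑ n ∈ Finset.range N, Y n ω) ∂P = 0 := by
  have hint1 : ∀ n ∈ Finset.range N, Integrable (fun ω => R n ω * g) P :=
    fun n hn => ((hR2 n (Finset.mem_range.mp hn)).integrable one_le_two).mul_const g
  have hint2 : ∀ m ∈ Finset.range N, ∀ n ∈ Finset.range N,
      Integrable (fun ω => R m ω * Y n ω) P :=
    fun m hm n hn => int_mul P (hR2 m (Finset.mem_range.mp hm)) (hY2 n (Finset.mem_range.mp hn))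
  have hpt : ∀ ω, (∑ n ∈ Finset.range N, R n ω) * (g + ∑ n ∈ Finset.range N, Y n ω)
      = (∑ n ∈ Finset.range N, R n ω * g)
        + ∑ m ∈ Finset.range N, ∑ n ∈ Finset.range N, R m ω * Y n ω := by
    intro ω
    rw [mul_add, Finset.sum_mul, Finset.sum_mul_sum]
  rw [integral_congr_ae (Eventually.of_forall hpt)]
  rw [integral_add (integrable_finset_sum _ hint1)
    (integrable_finset_sum _ fun m hm => integrable_finset_sum _ (hint2 m hm))]
  rw [integral_finset_sum _ hint1,
    integral_finset_sum _ fun m hm => integrable_finset_sum _ (hint2 m hm)]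
  have e1 : ∑ n ∈ Finset.range N, ∫ ω, R n ω * g ∂P = 0 := by
    refine Finset.sum_eq_zero fun n hn => ?_
    rw [integral_mul_const, hR0 n (Finset.mem_range.mp hn), zero_mul]
  have e2 : ∑ m ∈ Finset.range N, ∫ ω, ∑ n ∈ Finset.range N, R m ω * Y n ω ∂P = 0 := by
    refine Finset.sum_eq_zero fun m hm => ?_
    rw [integral_finset_sum _ (hint2 m hm)]
    exact Finset.sum_eq_zero fun n hn =>
      hRY m (Finset.mem_range.mp hm) n (Finset.mem_range.mp hn)
  rw [e1, e2, add_zero]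

end StmtAux

/-- the residual `M_N − M_0 − ∑_{n<N} α*_{n+1}·ΔS̃_{n+1}` is orthogonal in `L²(Q)`
to every martingale transform `g + ∑_{n<N} c_{n+1}·ΔS̃_{n+1}` of `S̃` with predictable,
square-integrable integrands; hence `M_0 + ∑_{n<N} α*_{n+1}·ΔS̃_{n+1}` is the `L²(Q)`-orthogonal
projection of `M_N` onto the space of terminal values of martingale transforms of `S̃`. -/
theorem stmt0 {Ω : Type*} [m0 : MeasurableSpace Ω] (P : Measure Ω) [IsProbabilityMeasure P]
    (d N : ℕ) (hd : 1 ≤ d) (hN : 1 ≤ N)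
    (ℱ : ℕ → MeasurableSpace Ω) (hmono : Monotone ℱ) (hle : ∀ n, ℱ n ≤ m0)
    (S : ℕ → Ω → Fin d → ℝ) (M : ℕ → Ω → ℝ)
    (hSadapted : ∀ n, ∀ i, StronglyMeasurable[ℱ n] fun ω => S n ω i)
    (hSL2 : ∀ n, ∀ i, MemLp (fun ω => S n ω i) 2 P)
    (hSmart : ∀ n < N, ∀ i, (P[fun ω => S (n + 1) ω i | ℱ n]) =ᵐ[P] fun ω => S n ω i)
    (hMadapted : ∀ n, StronglyMeasurable[ℱ n] (M n))
    (hML2 : ∀ n, MemLp (M n) 2 P)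
    (hMmart : ∀ n < N, (P[M (n + 1) | ℱ n]) =ᵐ[P] M n)
    (hinv : ∀ n < N, ∀ᵐ ω ∂P, IsUnit (condCovMatrix P ℱ S n ω))
    (hαL2 : ∀ n < N, MemLp
      (fun ω => ∑ i, alphaStar P ℱ S M n ω i * (S (n + 1) ω i - S n ω i)) 2 P)
    (g : ℝ) (c : ℕ → Ω → Fin d → ℝ)
    (hcpred : ∀ n < N, ∀ i, StronglyMeasurable[ℱ n] fun ω => c (n + 1) ω i)
    (hcL2 : ∀ n < N, MemLp (fun ω => ∑ i, c (n + 1) ω i * (S (n + 1) ω i - S n ω i)) 2 P) :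
    ∫ ω, (M N ω - M 0 ω -
        ∑ n ∈ Finset.range N, ∑ i, alphaStar P ℱ S M n ω i * (S (n + 1) ω i - S n ω i)) *
      (g + ∑ n ∈ Finset.range N, ∑ i, c (n + 1) ω i * (S (n + 1) ω i - S n ω i)) ∂P = 0 := by
  classical
  have hΔS2' : ∀ n, ∀ i : Fin d, MemLp (fun ω => S (n+1) ω i - S n ω i) 2 P :=
    fun n i => (hSL2 (n+1) i).sub (hSL2 n i)
  have hΔS0 : ∀ n < N, ∀ i : Fin d,
      (P[fun ω => S (n+1) ω i - S n ω i|ℱ n]) =ᵐ[P] 0 := fun n hn i =>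
    StmtAux.condexp_diff_zero P (hle n) ((hSL2 (n+1) i).integrable one_le_two)
      ((hSL2 n i).integrable one_le_two) (hSadapted n i) (hSmart n hn i)
  have hD2 : ∀ n, MemLp (fun ω => M (n+1) ω - M n ω) 2 P :=
    fun n => (hML2 (n+1)).sub (hML2 n)
  have hD0 : ∀ n < N, (P[fun ω => M (n+1) ω - M n ω|ℱ n]) =ᵐ[P] 0 := fun n hn =>
    StmtAux.condexp_diff_zero P (hle n) ((hML2 (n+1)).integrable one_le_two)
      ((hML2 n).integrable one_le_two) (hMadapted n) (hMmart n hn)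
  have ham : ∀ n, ∀ j : Fin d, StronglyMeasurable[ℱ n] fun ω => alphaStar P ℱ S M n ω j :=
    fun n => StmtAux.sm_alphaStar P ℱ S M n
  have hDsm : ∀ n, StronglyMeasurable[ℱ (n+1)] fun ω => M (n+1) ω - M n ω :=
    fun n => (hMadapted (n+1)).sub ((hMadapted n).mono (hmono (Nat.le_succ n)))
  have hXsm : ∀ n, StronglyMeasurable[ℱ (n+1)]
      fun ω => ∑ i, alphaStar P ℱ S M n ω i * (S (n+1) ω i - S n ω i) := fun n =>
    Finset.stronglyMeasurable_fun_sum _ fun i _ =>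
      (((ham n i).mono (hmono (Nat.le_succ n))).mul
        ((hSadapted (n+1) i).sub ((hSadapted n i).mono (hmono (Nat.le_succ n)))))
  have hYsm : ∀ n < N, StronglyMeasurable[ℱ (n+1)]
      fun ω => ∑ i, c (n+1) ω i * (S (n+1) ω i - S n ω i) := fun n hn =>
    Finset.stronglyMeasurable_fun_sum _ fun i _ =>
      (((hcpred n hn i).mono (hmono (Nat.le_succ n))).mul
        ((hSadapted (n+1) i).sub ((hSadapted n i).mono (hmono (Nat.le_succ n)))))
  have hR2 : ∀ n < N, MemLp (fun ω => M (n+1) ω - M n ω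
      - ∑ i, alphaStar P ℱ S M n ω i * (S (n+1) ω i - S n ω i)) 2 P :=
    fun n hn => (hD2 n).sub (hαL2 n hn)
  have hR0 : ∀ n < N, ∫ ω, (M (n+1) ω - M n ω
      - ∑ i, alphaStar P ℱ S M n ω i * (S (n+1) ω i - S n ω i)) ∂P = 0 := by
    intro n hn
    rw [integral_sub ((hD2 n).integrable one_le_two) ((hαL2 n hn).integrable one_le_two)]
    have h1 : ∫ ω, (M (n+1) ω - M n ω) ∂P = 0 := by
      rw [← integral_condExp (hle n) (f := fun ω => M (n+1) ω - M n ω)]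
      rw [integral_congr_ae (hD0 n hn)]
      simp
    have h2 : ∫ ω, ∑ i, alphaStar P ℱ S M n ω i * (S (n+1) ω i - S n ω i) ∂P = 0 := by
      have h3 := StmtAux.lemA P (hle n) (fun ω i => S (n+1) ω i - S n ω i)
        (hΔS2' n) (hΔS0 n hn) (fun _ => (1:ℝ)) stronglyMeasurable_const
        (memLp_const 1) (fun ω i => alphaStar P ℱ S M n ω i) (ham n) (hαL2 n hn)
      simpa using h3
    rw [h1, h2, sub_zero]
  have hRY : ∀ m' < N, ∀ n < N, ∫ ω, (M (m'+1) ω - M m' ω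
      - ∑ i, alphaStar P ℱ S M m' ω i * (S (m'+1) ω i - S m' ω i))
      * (∑ i, c (n+1) ω i * (S (n+1) ω i - S n ω i)) ∂P = 0 := by
    intro m' hm' n hn
    rcases Nat.lt_trichotomy m' n with h | h | h
    · exact StmtAux.lemA P (hle n) (fun ω i => S (n+1) ω i - S n ω i) (hΔS2' n)
        (hΔS0 n hn)
        (fun ω => M (m'+1) ω - M m' ω
          - ∑ i, alphaStar P ℱ S M m' ω i * (S (m'+1) ω i - S m' ω i))
        (((hDsm m').sub (hXsm m')).mono (hmono (Nat.succ_le_of_lt h)))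
        (hR2 m' hm')
        (fun ω i => c (n+1) ω i) (hcpred n hn) (hcL2 n hn)
    · subst h
      exact StmtAux.lemD P ℱ S M m' (hle m') (hΔS2' m') (hD2 m') (hinv m' hm') (hαL2 m' hm')
        (fun ω i => c (m'+1) ω i) (hcpred m' hm') (hcL2 m' hm')
    · have hYsm' : StronglyMeasurable[ℱ m']
          fun ω => ∑ i, c (n+1) ω i * (S (n+1) ω i - S n ω i) :=
        (hYsm n hn).mono (hmono (Nat.succ_le_of_lt h))
      have hptw : ∀ ω, (M (m'+1) ω - M m' ω
          - ∑ i, alphaStar P ℱ S M m' ω i * (S (m'+1) ω i - S m' ω i))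
          * (∑ i, c (n+1) ω i * (S (n+1) ω i - S n ω i))
        = (∑ i, c (n+1) ω i * (S (n+1) ω i - S n ω i)) * (M (m'+1) ω - M m' ω)
          - (∑ i, c (n+1) ω i * (S (n+1) ω i - S n ω i))
            * ∑ i, alphaStar P ℱ S M m' ω i * (S (m'+1) ω i - S m' ω i) := fun ω => by ring
      rw [integral_congr_ae (Filter.Eventually.of_forall hptw)]
      rw [integral_sub (StmtAux.int_mul P (hcL2 n hn) (hD2 m'))
        (StmtAux.int_mul P (hcL2 n hn) (hαL2 m' hm'))]
      have h1 : ∫ ω, (∑ i, c (n+1) ω i * (S (n+1) ω i - S n ω i))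
          * (M (m'+1) ω - M m' ω) ∂P = 0 :=
        StmtAux.integral_mul_eq_zero P (hle m') hYsm'
          ((hD2 m').integrable one_le_two) (hD0 m' hm')
          (StmtAux.int_mul P (hcL2 n hn) (hD2 m'))
      have h2 : ∫ ω, (∑ i, c (n+1) ω i * (S (n+1) ω i - S n ω i))
          * ∑ i, alphaStar P ℱ S M m' ω i * (S (m'+1) ω i - S m' ω i) ∂P = 0 :=
        StmtAux.lemA P (hle m') (fun ω i => S (m'+1) ω i - S m' ω i) (hΔS2' m')
          (hΔS0 m' hm') _ hYsm' (hcL2 n hn)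
          (fun ω i => alphaStar P ℱ S M m' ω i) (ham m') (hαL2 m' hm')
      rw [h1, h2, sub_zero]
  have hgoalpt : ∀ ω : Ω, (M N ω - M 0 ω
      - ∑ n ∈ Finset.range N, ∑ i, alphaStar P ℱ S M n ω i * (S (n + 1) ω i - S n ω i))
      * (g + ∑ n ∈ Finset.range N, ∑ i, c (n + 1) ω i * (S (n + 1) ω i - S n ω i))
    = (∑ n ∈ Finset.range N, (M (n+1) ω - M n ω
        - ∑ i, alphaStar P ℱ S M n ω i * (S (n + 1) ω i - S n ω i)))
      * (g + ∑ n ∈ Finset.range N, ∑ i, c (n + 1) ω i * (S (n + 1) ω i - S n ω i)) := by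
    intro ω
    rw [Finset.sum_sub_distrib, Finset.sum_range_sub (fun k => M k ω)]
  rw [integral_congr_ae (Filter.Eventually.of_forall hgoalpt)]
  exact StmtAux.main_aux P
    (fun n ω => M (n+1) ω - M n ω
      - ∑ i, alphaStar P ℱ S M n ω i * (S (n + 1) ω i - S n ω i))
    (fun n ω => ∑ i, c (n + 1) ω i * (S (n + 1) ω i - S n ω i)) g
    hR2 (fun n hn => hcL2 n hn) hR0 hRY
end StmtAux
end

section
/- Suppose that inf_{β ∈ ℝ^m, |β| = 1} Var(V(β)) > 0. Then for every γ > 0 the mean–variance objective F_γ attains its maximum on ℝ^m: there exists β* ∈ ℝ^m such that F_γ(β*) ≥ F_γ(β) for all β ∈ ℝ^m. -/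
open MeasureTheory ProbabilityTheory
open scoped InnerProductSpace

/-- The random portfolio value `R(β) = V₀ + ⟨D, β⟩ − ν ∑_j |⟨K_j, β⟩|`. -/
noncomputable def Rport {Ω : Type*} {m q : ℕ} (V0 ν : ℝ)
    (D : Ω → EuclideanSpace ℝ (Fin m)) (K : Fin q → Ω → EuclideanSpace ℝ (Fin m))
    (β : EuclideanSpace ℝ (Fin m)) (ω : Ω) : ℝ :=
  V0 + ⟪D ω, β⟫_ℝ - ν * ∑ j, |⟪K j ω, β⟫_ℝ|

/-- The terminal portfolio value `V(β) = R(β) · S₀`. -/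
noncomputable def Vport {Ω : Type*} {m q : ℕ} (V0 S0 ν : ℝ)
    (D : Ω → EuclideanSpace ℝ (Fin m)) (K : Fin q → Ω → EuclideanSpace ℝ (Fin m))
    (β : EuclideanSpace ℝ (Fin m)) (ω : Ω) : ℝ :=
  Rport V0 ν D K β ω * S0

/-- The Sharpe ratio `Sharpe(β) = (E[V(β)] − V₀S₀)/√Var(V(β))`. -/
noncomputable def sharpeRatio {Ω : Type*} [MeasurableSpace Ω] (P : Measure Ω) {m q : ℕ}
    (V0 S0 ν : ℝ) (D : Ω → EuclideanSpace ℝ (Fin m)) (K : Fin q → Ω → EuclideanSpace ℝ (Fin m))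
    (β : EuclideanSpace ℝ (Fin m)) : ℝ :=
  ((∫ ω, Vport V0 S0 ν D K β ω ∂P) - V0 * S0) /
    Real.sqrt (variance (Vport V0 S0 ν D K β) P)

/-- The mean–variance objective `F_γ(β) = E[V(β)] − γ Var(V(β))`. -/
noncomputable def Fobj {Ω : Type*} [MeasurableSpace Ω] (P : Measure Ω) {m q : ℕ}
    (V0 S0 ν : ℝ) (D : Ω → EuclideanSpace ℝ (Fin m)) (K : Fin q → Ω → EuclideanSpace ℝ (Fin m))
    (γ : ℝ) (β : EuclideanSpace ℝ (Fin m)) : ℝ :=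
  (∫ ω, Vport V0 S0 ν D K β ω ∂P) - γ * variance (Vport V0 S0 ν D K β) P

/-- `β` is a `γ`-zero-gradient point: `P(⟨K_j, β⟩ = 0) = 0` for every `j` and
`E[(D − ν ∑_j sign(⟨K_j, β⟩) K_j) · S₀ · (1 − 2γS₀(R(β) − E[R(β)]))] = 0` in `ℝ^m`. -/
def ZeroGrad {Ω : Type*} [MeasurableSpace Ω] (P : Measure Ω) {m q : ℕ}
    (V0 S0 ν : ℝ) (D : Ω → EuclideanSpace ℝ (Fin m)) (K : Fin q → Ω → EuclideanSpace ℝ (Fin m))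
    (γ : ℝ) (β : EuclideanSpace ℝ (Fin m)) : Prop :=
  (∀ j, P {ω | ⟪K j ω, β⟫_ℝ = 0} = 0) ∧
  (∫ ω, (S0 * (1 - 2 * γ * S0 * (Rport V0 ν D K β ω - ∫ ω', Rport V0 ν D K β ω' ∂P))) •
      (D ω - ν • ∑ j, Real.sign ⟪K j ω, β⟫_ℝ • K j ω) ∂P) = 0


private lemma aux_var_const_add {Ω : Type*} [MeasurableSpace Ω] (μ : Measure Ω)
    [IsProbabilityMeasure μ] (c : ℝ) {Y : Ω → ℝ} (hY : Integrable Y μ) :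
    variance (fun ω => c + Y ω) μ = variance Y μ := by
  have h : (∫ ω, (c + Y ω) ∂μ) = c + ∫ ω, Y ω ∂μ := by
    rw [integral_add (integrable_const c) hY, integral_const]
    simp
  unfold ProbabilityTheory.variance ProbabilityTheory.evariance
  congr 1
  refine lintegral_congr fun ω => ?_
  rw [h]
  ring_nf

/-- if the variance is bounded away from `0` on the unit sphere, then for every
`γ > 0` the mean–variance objective `F_γ` attains its maximum on `ℝ^m`. -/
theorem stmt1 {Ω : Type*} [MeasurableSpace Ω] (P : Measure Ω) [IsProbabilityMeasure P]
    {m q : ℕ} (hm : 0 < m) (hq : 0 < q)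
    (V0 S0 ν : ℝ) (hV0 : 0 < V0) (hS0 : 0 < S0) (hν : 0 ≤ ν)
    (D : Ω → EuclideanSpace ℝ (Fin m)) (K : Fin q → Ω → EuclideanSpace ℝ (Fin m))
    (hD : MemLp D 2 P) (hK : ∀ j, MemLp (K j) 2 P)
    (hvar : ∃ ε > (0 : ℝ), ∀ β : EuclideanSpace ℝ (Fin m), ‖β‖ = 1 →
      ε ≤ variance (Vport V0 S0 ν D K β) P) :
    ∀ γ : ℝ, 0 < γ → ∃ βstar : EuclideanSpace ℝ (Fin m),
      ∀ β : EuclideanSpace ℝ (Fin m),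
        Fobj P V0 S0 ν D K γ β ≤ Fobj P V0 S0 ν D K γ βstar := by
  obtain ⟨ε, hε, hvar⟩ := hvar
  intro γ hγ
  -- dominating function
  set g : Ω → ℝ := fun ω => ‖D ω‖ + ν * ∑ j, ‖K j ω‖ with hg_def
  have hg_nonneg : ∀ ω, 0 ≤ g ω := fun ω =>
    add_nonneg (norm_nonneg _) (mul_nonneg hν (Finset.sum_nonneg fun j _ => norm_nonneg _))
  have hsum_mem : MemLp (fun ω => ∑ j, ‖K j ω‖) 2 P := by
    have h := memLp_finset_sum' (μ := P) (p := 2) Finset.univ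
      (fun j (_ : j ∈ Finset.univ) => (hK j).norm)
    refine h.ae_eq (Filter.Eventually.of_forall fun ω => ?_)
    simp
  have hg_mem : MemLp g 2 P := by
    have h := hD.norm.add (hsum_mem.const_mul ν)
    exact h.ae_eq (Filter.Eventually.of_forall fun ω => rfl)
  have hg_int : Integrable g P := hg_mem.integrable one_le_two
  have hg_sq_int : Integrable (fun ω => g ω ^ 2) P := hg_mem.integrable_sq
  -- pointwise Lipschitz bound for Rport
  have hR_lip : ∀ (β β' : EuclideanSpace ℝ (Fin m)) ω,
      |Rport V0 ν D K β ω - Rport V0 ν D K β' ω| ≤ g ω * ‖β - β'‖ := by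
    intro β β' ω
    set A := ∑ j, |⟪K j ω, β⟫_ℝ| with hA
    set B := ∑ j, |⟪K j ω, β'⟫_ℝ| with hB
    have h1 : Rport V0 ν D K β ω - Rport V0 ν D K β' ω
        = ⟪D ω, β - β'⟫_ℝ - ν * (A - B) := by
      simp only [Rport, inner_sub_right, hA, hB]
      ring
    have hsum : |A - B| ≤ (∑ j, ‖K j ω‖) * ‖β - β'‖ := by
      rw [hA, hB, ← Finset.sum_sub_distrib, Finset.sum_mul]
      refine (Finset.abs_sum_le_sum_abs _ _).trans (Finset.sum_le_sum fun j _ => ?_)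
      calc |(|⟪K j ω, β⟫_ℝ| - |⟪K j ω, β'⟫_ℝ|)| ≤ |⟪K j ω, β⟫_ℝ - ⟪K j ω, β'⟫_ℝ| :=
            abs_abs_sub_abs_le_abs_sub _ _
        _ = |⟪K j ω, β - β'⟫_ℝ| := by rw [inner_sub_right]
        _ ≤ ‖K j ω‖ * ‖β - β'‖ := abs_real_inner_le_norm _ _
    have htri : |⟪D ω, β - β'⟫_ℝ - ν * (A - B)|
        ≤ |⟪D ω, β - β'⟫_ℝ| + ν * |A - B| := by
      rw [sub_eq_add_neg]
      refine (abs_add_le _ _).trans ?_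
      rw [abs_neg, abs_mul, abs_of_nonneg hν]
    rw [h1]
    have hD' := abs_real_inner_le_norm (D ω) (β - β')
    have hmul := mul_le_mul_of_nonneg_left hsum hν
    show _ ≤ (‖D ω‖ + ν * ∑ j, ‖K j ω‖) * ‖β - β'‖
    nlinarith [htri]
  have hR0 : ∀ ω, Rport V0 ν D K 0 ω = V0 := by intro ω; simp [Rport]
  have hR_bound : ∀ (β : EuclideanSpace ℝ (Fin m)) ω,
      |Rport V0 ν D K β ω| ≤ V0 + g ω * ‖β‖ := by
    intro β ω
    have h1 := hR_lip β 0 ω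
    rw [hR0, sub_zero] at h1
    have h2 := abs_sub_abs_le_abs_sub (Rport V0 ν D K β ω) V0
    have h3 : |V0| = V0 := abs_of_pos hV0
    linarith
  -- MemLp of Vport
  have hV_mem : ∀ β : EuclideanSpace ℝ (Fin m), MemLp (Vport V0 S0 ν D K β) 2 P := by
    intro β
    have h1 : MemLp (fun ω => ⟪D ω, β⟫_ℝ) 2 P := hD.inner_const β
    have h2 : MemLp (fun ω => ∑ j, |⟪K j ω, β⟫_ℝ|) 2 P := by
      have hj : ∀ j : Fin q, MemLp (fun ω => |⟪K j ω, β⟫_ℝ|) 2 P := by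
        intro j
        have h : MemLp (fun ω => ‖⟪K j ω, β⟫_ℝ‖) 2 P := ((hK j).inner_const β).norm
        refine h.ae_eq (Filter.Eventually.of_forall fun ω => ?_)
        simp [Real.norm_eq_abs]
      have h := memLp_finset_sum' (μ := P) (p := 2) Finset.univ
        (fun j (_ : j ∈ Finset.univ) => hj j)
      refine h.ae_eq (Filter.Eventually.of_forall fun ω => ?_)
      simp
    have h3 : MemLp (Rport V0 ν D K β) 2 P := by
      have h := ((memLp_const (μ := P) (p := 2) V0).add h1).sub (h2.const_mul ν)
      exact h.ae_eq (Filter.Eventually.of_forall fun ω => rfl)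
    have h4 := h3.const_mul S0
    refine h4.ae_eq (Filter.Eventually.of_forall fun ω => ?_)
    simp only [Vport]
    ring
  have hV_int : ∀ β : EuclideanSpace ℝ (Fin m), Integrable (Vport V0 S0 ν D K β) P :=
    fun β => (hV_mem β).integrable one_le_two
  have hV_sq_int : ∀ β : EuclideanSpace ℝ (Fin m),
      Integrable (fun ω => (Vport V0 S0 ν D K β ω) ^ 2) P := fun β => (hV_mem β).integrable_sq
  -- mean and second moment
  set M : EuclideanSpace ℝ (Fin m) → ℝ := fun β => ∫ ω, Vport V0 S0 ν D K β ω ∂P with hM_def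
  set Q : EuclideanSpace ℝ (Fin m) → ℝ :=
    fun β => ∫ ω, (Vport V0 S0 ν D K β ω) ^ 2 ∂P with hQ_def
  have hVar_eq : ∀ β : EuclideanSpace ℝ (Fin m),
      variance (Vport V0 S0 ν D K β) P = Q β - (M β) ^ 2 := by
    intro β
    rw [variance_eq_sub (hV_mem β), hQ_def, hM_def]
    rfl
  -- pointwise bounds for Vport
  have hV_lip : ∀ (β β' : EuclideanSpace ℝ (Fin m)) ω,
      |Vport V0 S0 ν D K β ω - Vport V0 S0 ν D K β' ω| ≤ S0 * (g ω * ‖β - β'‖) := by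
    intro β β' ω
    have h1 : Vport V0 S0 ν D K β ω - Vport V0 S0 ν D K β' ω
        = (Rport V0 ν D K β ω - Rport V0 ν D K β' ω) * S0 := by
      simp only [Vport]; ring
    rw [h1, abs_mul, abs_of_pos hS0]
    nlinarith [hR_lip β β' ω, hS0.le]
  have hV_bound : ∀ (β : EuclideanSpace ℝ (Fin m)) ω,
      |Vport V0 S0 ν D K β ω| ≤ S0 * (V0 + g ω * ‖β‖) := by
    intro β ω
    have h1 : |Vport V0 S0 ν D K β ω| = |Rport V0 ν D K β ω| * S0 := by
      rw [Vport, abs_mul, abs_of_pos hS0]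
    rw [h1]
    nlinarith [hR_bound β ω, hS0.le]
  -- M is Lipschitz, hence continuous
  have hIg : 0 ≤ ∫ ω, g ω ∂P := integral_nonneg hg_nonneg
  have hM_lip : ∀ β β' : EuclideanSpace ℝ (Fin m),
      |M β - M β'| ≤ (S0 * ∫ ω, g ω ∂P) * ‖β - β'‖ := by
    intro β β'
    have h1 : M β - M β' = ∫ ω, (Vport V0 S0 ν D K β ω - Vport V0 S0 ν D K β' ω) ∂P :=
      (integral_sub (hV_int β) (hV_int β')).symm
    rw [h1]
    calc |∫ ω, (Vport V0 S0 ν D K β ω - Vport V0 S0 ν D K β' ω) ∂P|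
        ≤ ∫ ω, |Vport V0 S0 ν D K β ω - Vport V0 S0 ν D K β' ω| ∂P := by
          simpa [Real.norm_eq_abs] using
            norm_integral_le_integral_norm (fun ω => Vport V0 S0 ν D K β ω - Vport V0 S0 ν D K β' ω) (μ := P)
      _ ≤ ∫ ω, S0 * (g ω * ‖β - β'‖) ∂P := by
          refine integral_mono ((hV_int β).sub (hV_int β')).abs ?_ (fun ω => hV_lip β β' ω)
          exact ((hg_int.mul_const _).const_mul _)
      _ = (S0 * ∫ ω, g ω ∂P) * ‖β - β'‖ := by
          rw [integral_const_mul, integral_mul_const]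
          ring
  have hM_cont : Continuous M := by
    refine LipschitzWith.continuous (K := Real.toNNReal (S0 * ∫ ω, g ω ∂P))
      (LipschitzWith.of_dist_le_mul fun x y => ?_)
    rw [Real.dist_eq, dist_eq_norm]
    exact (hM_lip x y).trans
      (mul_le_mul_of_nonneg_right (Real.le_coe_toNNReal _) (norm_nonneg _))
  -- Q is Lipschitz on balls
  have hQ_lip : ∀ r : ℝ, 0 ≤ r → ∀ β β' : EuclideanSpace ℝ (Fin m), ‖β‖ ≤ r → ‖β'‖ ≤ r →
      |Q β - Q β'| ≤ (S0 ^ 2 * ∫ ω, (2 * V0 * g ω + 2 * r * g ω ^ 2) ∂P) * ‖β - β'‖ := by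
    intro r hr β β' hβ hβ'
    have hHint : Integrable (fun ω => 2 * V0 * g ω + 2 * r * g ω ^ 2) P :=
      (hg_int.const_mul _).add (hg_sq_int.const_mul _)
    have hpt : ∀ ω, |(Vport V0 S0 ν D K β ω) ^ 2 - (Vport V0 S0 ν D K β' ω) ^ 2|
        ≤ S0 ^ 2 * (2 * V0 * g ω + 2 * r * g ω ^ 2) * ‖β - β'‖ := by
      intro ω
      have hkey : |(Vport V0 S0 ν D K β ω) ^ 2 - (Vport V0 S0 ν D K β' ω) ^ 2|
          = |Vport V0 S0 ν D K β ω - Vport V0 S0 ν D K β' ω|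
            * |Vport V0 S0 ν D K β ω + Vport V0 S0 ν D K β' ω| := by
        rw [← abs_mul]
        ring_nf
      have habs : |Vport V0 S0 ν D K β ω + Vport V0 S0 ν D K β' ω|
          ≤ S0 * (V0 + g ω * ‖β‖) + S0 * (V0 + g ω * ‖β'‖) :=
        (abs_add_le _ _).trans (add_le_add (hV_bound β ω) (hV_bound β' ω))
      rw [hkey]
      have h1 := hV_lip β β' ω
      have h2 : (0:ℝ) ≤ |Vport V0 S0 ν D K β ω + Vport V0 S0 ν D K β' ω| := abs_nonneg _
      have h3 : (0:ℝ) ≤ S0 * (g ω * ‖β - β'‖) :=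
        mul_nonneg hS0.le (mul_nonneg (hg_nonneg ω) (norm_nonneg _))
      have h4 := mul_le_mul h1 habs h2 h3
      have h5 : S0 * (g ω * ‖β - β'‖) * (S0 * (V0 + g ω * ‖β‖) + S0 * (V0 + g ω * ‖β'‖))
          ≤ S0 ^ 2 * (2 * V0 * g ω + 2 * r * g ω ^ 2) * ‖β - β'‖ := by
        have hgg : g ω * (‖β‖ + ‖β'‖) ≤ g ω * (2 * r) :=
          mul_le_mul_of_nonneg_left (by linarith) (hg_nonneg ω)
        nlinarith [hg_nonneg ω, norm_nonneg (β - β'), hS0.le,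
          mul_nonneg (mul_nonneg (mul_nonneg hS0.le hS0.le) (hg_nonneg ω)) (norm_nonneg (β - β'))]
      exact h4.trans h5
    have h1 : Q β - Q β'
        = ∫ ω, ((Vport V0 S0 ν D K β ω) ^ 2 - (Vport V0 S0 ν D K β' ω) ^ 2) ∂P :=
      (integral_sub (hV_sq_int β) (hV_sq_int β')).symm
    rw [h1]
    calc |∫ ω, ((Vport V0 S0 ν D K β ω) ^ 2 - (Vport V0 S0 ν D K β' ω) ^ 2) ∂P|
        ≤ ∫ ω, |(Vport V0 S0 ν D K β ω) ^ 2 - (Vport V0 S0 ν D K β' ω) ^ 2| ∂P := by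
          simpa [Real.norm_eq_abs] using norm_integral_le_integral_norm
            (fun ω => (Vport V0 S0 ν D K β ω) ^ 2 - (Vport V0 S0 ν D K β' ω) ^ 2) (μ := P)
      _ ≤ ∫ ω, S0 ^ 2 * (2 * V0 * g ω + 2 * r * g ω ^ 2) * ‖β - β'‖ ∂P := by
          refine integral_mono ((hV_sq_int β).sub (hV_sq_int β')).abs ?_ hpt
          exact (hHint.const_mul _).mul_const _
      _ = (S0 ^ 2 * ∫ ω, (2 * V0 * g ω + 2 * r * g ω ^ 2) ∂P) * ‖β - β'‖ := by
          rw [integral_mul_const, integral_const_mul]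
  -- variance lower bound (coercivity)
  have hVar_lb : ∀ β : EuclideanSpace ℝ (Fin m),
      ε * ‖β‖ ^ 2 ≤ variance (Vport V0 S0 ν D K β) P := by
    intro β
    rcases eq_or_ne β 0 with rfl | hβ
    · simpa using variance_nonneg (Vport V0 S0 ν D K 0) P
    · have hn : 0 < ‖β‖ := norm_pos_iff.mpr hβ
      set u : EuclideanSpace ℝ (Fin m) := ‖β‖⁻¹ • β with hu_def
      have hu : ‖u‖ = 1 := by
        rw [hu_def, norm_smul, norm_inv, norm_norm, inv_mul_cancel₀ hn.ne']
      have hβu : β = ‖β‖ • u := by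
        rw [hu_def, smul_smul, mul_inv_cancel₀ hn.ne', one_smul]
      have hVeq : Vport V0 S0 ν D K β
          = fun ω => (V0 * S0 - ‖β‖ * (V0 * S0)) + ‖β‖ * Vport V0 S0 ν D K u ω := by
        funext ω
        have h1 : ⟪D ω, β⟫_ℝ = ‖β‖ * ⟪D ω, u⟫_ℝ := by
          conv_lhs => rw [hβu]
          rw [real_inner_smul_right]
        have h2 : ∀ j, |⟪K j ω, β⟫_ℝ| = ‖β‖ * |⟪K j ω, u⟫_ℝ| := by
          intro j
          conv_lhs => rw [hβu]
          rw [real_inner_smul_right, abs_mul, abs_of_pos hn]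
        simp only [Vport, Rport, h1, Finset.sum_congr rfl (fun j _ => h2 j), ← Finset.mul_sum]
        ring
      rw [hVeq, aux_var_const_add P _ ((hV_int u).const_mul ‖β‖),
        variance_const_mul ‖β‖ (Vport V0 S0 ν D K u) P]
      have := hvar u hu
      nlinarith [sq_nonneg ‖β‖]
  -- mean upper bound
  have hM_ub : ∀ β : EuclideanSpace ℝ (Fin m),
      M β ≤ V0 * S0 + (S0 * ∫ ω, g ω ∂P) * ‖β‖ := by
    intro β
    calc M β ≤ ∫ ω, S0 * (V0 + g ω * ‖β‖) ∂P := by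
          refine integral_mono (hV_int β) ?_ (fun ω => (le_abs_self _).trans (hV_bound β ω))
          exact ((integrable_const V0).add (hg_int.mul_const _)).const_mul _
      _ = V0 * S0 + (S0 * ∫ ω, g ω ∂P) * ‖β‖ := by
          rw [integral_const_mul, integral_add (integrable_const V0) (hg_int.mul_const _),
            integral_const, integral_mul_const]
          simp [measure_univ]
          ring
  -- value at 0
  have hF0 : Fobj P V0 S0 ν D K γ 0 = V0 * S0 := by
    have hV0fun : Vport V0 S0 ν D K 0 = fun _ : Ω => V0 * S0 := by
      funext ω
      rw [Vport, hR0]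
    have hvar0 : variance (Vport V0 S0 ν D K 0) P = 0 := by
      rw [hV0fun]
      have h := aux_var_const_add P (V0 * S0)
        (Y := fun _ : Ω => (0:ℝ)) (integrable_const 0)
      have h0 : variance (fun _ : Ω => (0:ℝ)) P = 0 := variance_zero P
      simpa [h0] using h
    rw [Fobj, hvar0, hV0fun]
    simp [measure_univ]
  -- choice of radius
  set Cm : ℝ := S0 * ∫ ω, g ω ∂P with hCm_def
  have hCm0 : 0 ≤ Cm := mul_nonneg hS0.le hIg
  have hγε : 0 < γ * ε := mul_pos hγ hε
  set Rad : ℝ := Cm / (γ * ε) + 1 with hRad_def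
  have hRad_pos : 0 < Rad := by positivity
  -- far away, Fobj is below its value at 0
  have hFar : ∀ β : EuclideanSpace ℝ (Fin m), Rad < ‖β‖ →
      Fobj P V0 S0 ν D K γ β < Fobj P V0 S0 ν D K γ 0 := by
    intro β hβ
    have ht : 0 < ‖β‖ := hRad_pos.trans hβ
    have hdiv : Cm / (γ * ε) < ‖β‖ := by
      have h : Cm / (γ * ε) < Rad := by rw [hRad_def]; linarith
      exact h.trans hβ
    have hCmlt : Cm < γ * ε * ‖β‖ := by
      rw [div_lt_iff₀ hγε] at hdiv
      linarith [hdiv]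
    have hkey : Cm * ‖β‖ < γ * (ε * ‖β‖ ^ 2) := by nlinarith
    have hFβ : Fobj P V0 S0 ν D K γ β
        = M β - γ * variance (Vport V0 S0 ν D K β) P := rfl
    have h2 := mul_le_mul_of_nonneg_left (hVar_lb β) hγ.le
    rw [hFβ, hF0]
    have h3 := hM_ub β
    linarith
  -- maximize on the closed ball
  have hcomp : IsCompact (Metric.closedBall (0 : EuclideanSpace ℝ (Fin m)) Rad) :=
    isCompact_closedBall _ _
  have hcont : ContinuousOn (Fobj P V0 S0 ν D K γ) (Metric.closedBall 0 Rad) := by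
    have hQc : ContinuousOn Q (Metric.closedBall 0 Rad) := by
      refine LipschitzOnWith.continuousOn
        (K := Real.toNNReal (S0 ^ 2 * ∫ ω, (2 * V0 * g ω + 2 * Rad * g ω ^ 2) ∂P))
        (LipschitzOnWith.of_dist_le_mul fun x hx y hy => ?_)
      rw [Real.dist_eq, dist_eq_norm]
      rw [Metric.mem_closedBall, dist_zero_right] at hx hy
      exact (hQ_lip Rad hRad_pos.le x y hx hy).trans
        (mul_le_mul_of_nonneg_right (Real.le_coe_toNNReal _) (norm_nonneg _))
    have hFeq : Fobj P V0 S0 ν D K γ = fun β => M β - γ * (Q β - (M β) ^ 2) := by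
      funext β
      rw [show Fobj P V0 S0 ν D K γ β
          = M β - γ * variance (Vport V0 S0 ν D K β) P from rfl, hVar_eq β]
    rw [hFeq]
    exact hM_cont.continuousOn.sub
      (continuousOn_const.mul (hQc.sub ((hM_cont.pow 2).continuousOn)))
  obtain ⟨βstar, hβmem, hmax⟩ := hcomp.exists_isMaxOn
    ⟨0, Metric.mem_closedBall_self hRad_pos.le⟩ hcont
  refine ⟨βstar, fun β => ?_⟩
  by_cases hβ : β ∈ Metric.closedBall (0 : EuclideanSpace ℝ (Fin m)) Rad
  · exact hmax hβ
  · have hout : Rad < ‖β‖ := by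
      rw [Metric.mem_closedBall, dist_zero_right, not_le] at hβ
      exact hβ
    exact ((hFar β hout).trans_le
      (hmax (Metric.mem_closedBall_self hRad_pos.le))).le
end

section
/- If β* is a γ-zero-gradient point, then E[V(β*)] − V₀·S₀ = 2γ·Var(V(β*)). In particular, if Var(V(β*)) > 0, then the risk aversion, Sharpe ratio and volatility of the portfolio are related by γ = Sharpe(β*)/(2·√Var(V(β*))). -/
open MeasureTheory ProbabilityTheory
open scoped InnerProductSpace

lemma measurable_realSign : Measurable Real.sign := by
  have : Real.sign = fun r : ℝ => if r < 0 then (-1:ℝ) else if 0 < r then 1 else 0 := rfl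
  rw [this]
  exact Measurable.ite (measurableSet_lt measurable_id measurable_const) measurable_const
    (Measurable.ite (measurableSet_lt measurable_const measurable_id)
      measurable_const measurable_const)

lemma sign_mul_self' (x : ℝ) : Real.sign x * x = |x| := by
  rcases lt_trichotomy x 0 with h | h | h
  · rw [Real.sign_of_neg h, abs_of_neg h]; ring
  · simp [h]
  · rw [Real.sign_of_pos h, abs_of_pos h, one_mul]


/-- at a `γ`-zero-gradient point, `E[V(β*)] − V₀S₀ = 2γ Var(V(β*))`; in particular,
if the variance is positive, `γ = Sharpe(β*)/(2 √Var(V(β*)))`. -/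
theorem stmt3 {Ω : Type*} [MeasurableSpace Ω] (P : Measure Ω) [IsProbabilityMeasure P]
    {m q : ℕ} (hm : 0 < m) (hq : 0 < q)
    (V0 S0 ν : ℝ) (hV0 : 0 < V0) (hS0 : 0 < S0) (hν : 0 ≤ ν)
    (D : Ω → EuclideanSpace ℝ (Fin m)) (K : Fin q → Ω → EuclideanSpace ℝ (Fin m))
    (hD : MemLp D 2 P) (hK : ∀ j, MemLp (K j) 2 P)
    (γ : ℝ) (hγ : 0 < γ) (βstar : EuclideanSpace ℝ (Fin m))
    (hzg : ZeroGrad P V0 S0 ν D K γ βstar) :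
    (∫ ω, Vport V0 S0 ν D K βstar ω ∂P) - V0 * S0
        = 2 * γ * variance (Vport V0 S0 ν D K βstar) P ∧
    (0 < variance (Vport V0 S0 ν D K βstar) P →
      γ = sharpeRatio P V0 S0 ν D K βstar
            / (2 * Real.sqrt (variance (Vport V0 S0 ν D K βstar) P))) := by
  obtain ⟨-, hgrad⟩ := hzg
  set β := βstar with hβ_def
  set R : Ω → ℝ := Rport V0 ν D K β with hR_def
  have hRfun : R = fun ω => V0 + ⟪D ω, β⟫_ℝ - ν * ∑ j, |⟪K j ω, β⟫_ℝ| := rfl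
  set μR : ℝ := ∫ ω, R ω ∂P with hμR_def
  -- MemLp / integrability facts
  have hDb : MemLp (fun ω => ⟪D ω, β⟫_ℝ) 2 P := hD.inner_const β
  have hKb : ∀ j, MemLp (fun ω => |⟪K j ω, β⟫_ℝ|) 2 P := by
    intro j
    simpa [Real.norm_eq_abs] using (MemLp.inner_const (𝕜 := ℝ) (hK j) β).norm
  have hR : MemLp R 2 P := by
    rw [hRfun]
    exact ((memLp_const V0).add hDb).sub
      ((memLp_finset_sum Finset.univ (fun j _ => hKb j)).const_mul ν)
  set c : Ω → ℝ := fun ω => S0 * (1 - 2 * γ * S0 * (R ω - μR)) with hc_def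
  have hc : MemLp c 2 P := by
    rw [hc_def]
    exact ((memLp_const 1).sub ((hR.sub (memLp_const μR)).const_mul (2*γ*S0))).const_mul S0
  set W : Ω → EuclideanSpace ℝ (Fin m) :=
    fun ω => D ω - ν • ∑ j, Real.sign ⟪K j ω, β⟫_ℝ • K j ω with hW_def
  have hsj : ∀ j : Fin q, MemLp (fun ω => Real.sign ⟪K j ω, β⟫_ℝ) ⊤ P := by
    intro j
    refine memLp_top_of_bound ?_ 1 (ae_of_all _ fun ω => ?_)
    · exact (measurable_realSign.comp_aemeasurable
        ((MemLp.inner_const (𝕜 := ℝ) (hK j) β).aestronglyMeasurable.aemeasurable)).aestronglyMeasurable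
    · rcases Real.sign_apply_eq ⟪K j ω, β⟫_ℝ with h | h | h <;> rw [Real.norm_eq_abs, h] <;> norm_num
  have hW : MemLp W 2 P := by
    rw [hW_def]
    have hsum : MemLp (fun ω => ∑ j, Real.sign ⟪K j ω, β⟫_ℝ • K j ω) 2 P :=
      memLp_finset_sum Finset.univ (fun j _ => (hK j).smul (hsj j))
    exact hD.sub (by exact hsum.const_smul ν)
  have hf_int : Integrable (fun ω => c ω • W ω) P := by
    have : MemLp (c • W) 1 P := hW.smul hc
    exact memLp_one_iff_integrable.mp this
  -- the zero-gradient condition, restated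
  have hint0 : ∫ ω, c ω • W ω ∂P = 0 := by
    simp only [hc_def, hW_def]
    exact hgrad
  have h1 : ∫ ω, ⟪β, c ω • W ω⟫_ℝ ∂P = 0 := by
    rw [integral_inner hf_int β, hint0, inner_zero_right]
  -- pointwise computation of the inner product
  have key : ∀ ω, ⟪β, c ω • W ω⟫_ℝ = c ω * (R ω - V0) := by
    intro ω
    have hWβ : ⟪β, W ω⟫_ℝ = R ω - V0 := by
      have hterm : ∀ j : Fin q, Real.sign ⟪K j ω, β⟫_ℝ * ⟪β, K j ω⟫_ℝ = |⟪K j ω, β⟫_ℝ| := by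
        intro j; rw [real_inner_comm, sign_mul_self']
      simp only [hW_def, inner_sub_right, real_inner_smul_right, inner_sum]
      rw [Finset.sum_congr rfl (fun j _ => hterm j), hRfun, real_inner_comm]
      ring
    rw [real_inner_smul_right, hWβ]
  have h2 : ∫ ω, c ω * (R ω - V0) ∂P = 0 := by
    calc ∫ ω, c ω * (R ω - V0) ∂P = ∫ ω, ⟪β, c ω • W ω⟫_ℝ ∂P :=
          integral_congr_ae (ae_of_all _ fun ω => (key ω).symm)
      _ = 0 := h1
  -- integrability of the pieces
  have hX2 : MemLp (fun ω => R ω - μR) 2 P := hR.sub (memLp_const μR)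
  have hiX : Integrable (fun ω => R ω - μR) P := hX2.integrable one_le_two
  have hiX2 : Integrable (fun ω => (R ω - μR) ^ 2) P := hX2.integrable_sq
  have hIX : ∫ ω, (R ω - μR) ∂P = 0 := by
    rw [integral_sub (hR.integrable one_le_two) (integrable_const μR), integral_const,
      probReal_univ, one_smul, ← hμR_def, sub_self]
  have hvarR : variance R P = ∫ ω, (R ω - μR) ^ 2 ∂P := by
    rw [variance_eq_integral hR.aestronglyMeasurable.aemeasurable]
  -- expand the integrand and compute
  have hrw : (fun ω => c ω * (R ω - V0))
      = fun ω => ((S0 - S0*(2*γ*S0)*(μR-V0)) * (R ω - μR)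
          + (-(S0*(2*γ*S0))) * (R ω - μR)^2) + S0*(μR-V0) := by
    funext ω; simp only [hc_def]; ring
  have hiA : Integrable (fun ω => (S0 - S0*(2*γ*S0)*(μR-V0)) * (R ω - μR)
      + (-(S0*(2*γ*S0))) * (R ω - μR)^2) P := (hiX.const_mul _).add (hiX2.const_mul _)
  rw [hrw, integral_add hiA (integrable_const _),
    integral_add (hiX.const_mul _) (hiX2.const_mul _), integral_const_mul, integral_const_mul,
    hIX, ← hvarR, integral_const, probReal_univ, one_smul, mul_zero,
    zero_add] at h2
  -- relate Vport to R
  have hVfun : Vport V0 S0 ν D K β = fun ω => S0 * R ω := funext fun ω => mul_comm (R ω) S0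
  have hEV : (∫ ω, Vport V0 S0 ν D K β ω ∂P) = S0 * μR := by
    simp only [hVfun]
    rw [integral_const_mul, ← hμR_def]
  have hVarV : variance (Vport V0 S0 ν D K β) P = S0 ^ 2 * variance R P := by
    rw [hVfun, variance_const_mul]
  have part1 : (∫ ω, Vport V0 S0 ν D K β ω ∂P) - V0 * S0
      = 2 * γ * variance (Vport V0 S0 ν D K β) P := by
    rw [hEV, hVarV]
    linear_combination h2
  refine ⟨part1, fun hv => ?_⟩
  have hs : 0 < Real.sqrt (variance (Vport V0 S0 ν D K β) P) := Real.sqrt_pos.mpr hv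
  have hss : Real.sqrt (variance (Vport V0 S0 ν D K β) P)
      * Real.sqrt (variance (Vport V0 S0 ν D K β) P) = variance (Vport V0 S0 ν D K β) P :=
    Real.mul_self_sqrt hv.le
  simp only [sharpeRatio]
  rw [part1, div_div, eq_div_iff (by positivity)]
  linear_combination 2 * γ * hss
end

section
/- Let γ > 0 and suppose β₁ and β₂ both maximize F_γ over ℝ^m and both satisfy the identity E[V(β_i)] − V₀·S₀ = 2γ·Var(V(β_i)) (i = 1, 2). Then E[V(β₁)] = E[V(β₂)] and Var(V(β₁)) = Var(V(β₂)); consequently, if the common variance is positive, Sharpe(β₁) = Sharpe(β₂). In other words, all γ-optimal portfolios have the same Sharpe ratio. -/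
open MeasureTheory ProbabilityTheory
open scoped InnerProductSpace

/-- two maximizers of `F_γ` satisfying `E[V(β_i)] − V₀S₀ = 2γ Var(V(β_i))` have the
same mean and the same variance; consequently, if the common variance is positive, they have
the same Sharpe ratio. -/
theorem stmt4 {Ω : Type*} [MeasurableSpace Ω] (P : Measure Ω) [IsProbabilityMeasure P]
    {m q : ℕ} (hm : 0 < m) (hq : 0 < q)
    (V0 S0 ν : ℝ) (hV0 : 0 < V0) (hS0 : 0 < S0) (hν : 0 ≤ ν)
    (D : Ω → EuclideanSpace ℝ (Fin m)) (K : Fin q → Ω → EuclideanSpace ℝ (Fin m))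
    (hD : MemLp D 2 P) (hK : ∀ j, MemLp (K j) 2 P)
    (γ : ℝ) (hγ : 0 < γ) (β₁ β₂ : EuclideanSpace ℝ (Fin m))
    (hmax₁ : ∀ β : EuclideanSpace ℝ (Fin m), Fobj P V0 S0 ν D K γ β ≤ Fobj P V0 S0 ν D K γ β₁)
    (hmax₂ : ∀ β : EuclideanSpace ℝ (Fin m), Fobj P V0 S0 ν D K γ β ≤ Fobj P V0 S0 ν D K γ β₂)
    (hid₁ : (∫ ω, Vport V0 S0 ν D K β₁ ω ∂P) - V0 * S0
        = 2 * γ * variance (Vport V0 S0 ν D K β₁) P)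
    (hid₂ : (∫ ω, Vport V0 S0 ν D K β₂ ω ∂P) - V0 * S0
        = 2 * γ * variance (Vport V0 S0 ν D K β₂) P) :
    (∫ ω, Vport V0 S0 ν D K β₁ ω ∂P) = (∫ ω, Vport V0 S0 ν D K β₂ ω ∂P) ∧
    variance (Vport V0 S0 ν D K β₁) P = variance (Vport V0 S0 ν D K β₂) P ∧
    (0 < variance (Vport V0 S0 ν D K β₁) P →
      sharpeRatio P V0 S0 ν D K β₁ = sharpeRatio P V0 S0 ν D K β₂) := by
  have hF : Fobj P V0 S0 ν D K γ β₁ = Fobj P V0 S0 ν D K γ β₂ :=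
    le_antisymm (hmax₂ β₁) (hmax₁ β₂)
  unfold Fobj at hF
  have hv : variance (Vport V0 S0 ν D K β₁) P = variance (Vport V0 S0 ν D K β₂) P := by
    nlinarith [hγ]
  have hE : (∫ ω, Vport V0 S0 ν D K β₁ ω ∂P) = (∫ ω, Vport V0 S0 ν D K β₂ ω ∂P) := by
    linarith
  refine ⟨hE, hv, fun _ => ?_⟩
  unfold sharpeRatio
  rw [hE, hv]
end

section
/- Let γ, γ' > 0 and let β be a γ-zero-gradient point with Var(V(β)) > 0. Then (γ/γ')·β is a γ'-zero-gradient point and Sharpe((γ/γ')·β) = Sharpe(β). In particular, the Sharpe ratio of a zero-gradient portfolio is independent of the risk aversion. -/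
open MeasureTheory ProbabilityTheory
open scoped InnerProductSpace

lemma sign_pos_mul (c x : ℝ) (hc : 0 < c) : Real.sign (c * x) = Real.sign x := by
  rcases lt_trichotomy x 0 with h | h | h
  · rw [Real.sign_of_neg h, Real.sign_of_neg (mul_neg_of_pos_of_neg hc h)]
  · rw [h, mul_zero]
  · rw [Real.sign_of_pos h, Real.sign_of_pos (mul_pos hc h)]

lemma variance_add_const' {Ω : Type*} [MeasurableSpace Ω] (P : Measure Ω)
    [IsProbabilityMeasure P] (X : Ω → ℝ) (hX : Integrable X P) (d : ℝ) :
    variance (fun ω => X ω + d) P = variance X P := by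
  have h : ∫ ω, (X ω + d) ∂P = (∫ ω, X ω ∂P) + d := by
    rw [integral_add hX (integrable_const d), integral_const]; simp
  unfold variance evariance
  rw [h]
  congr 1
  exact lintegral_congr fun ω => by
    rw [show X ω + d - ((∫ x, X x ∂P) + d) = X ω - ∫ x, X x ∂P by ring]

/-- if `β` is a `γ`-zero-gradient point with positive variance, then `(γ/γ')·β`
is a `γ'`-zero-gradient point with the same Sharpe ratio. -/
theorem stmt8 {Ω : Type*} [MeasurableSpace Ω] (P : Measure Ω) [IsProbabilityMeasure P]
    {m q : ℕ} (hm : 0 < m) (hq : 0 < q)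
    (V0 S0 ν : ℝ) (hV0 : 0 < V0) (hS0 : 0 < S0) (hν : 0 ≤ ν)
    (D : Ω → EuclideanSpace ℝ (Fin m)) (K : Fin q → Ω → EuclideanSpace ℝ (Fin m))
    (hD : MemLp D 2 P) (hK : ∀ j, MemLp (K j) 2 P)
    (γ γ' : ℝ) (hγ : 0 < γ) (hγ' : 0 < γ')
    (β : EuclideanSpace ℝ (Fin m)) (hzg : ZeroGrad P V0 S0 ν D K γ β)
    (hvar : 0 < variance (Vport V0 S0 ν D K β) P) :
    ZeroGrad P V0 S0 ν D K γ' ((γ / γ') • β) ∧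
    sharpeRatio P V0 S0 ν D K ((γ / γ') • β) = sharpeRatio P V0 S0 ν D K β := by
  set c : ℝ := γ / γ' with hc_def
  have hc : 0 < c := div_pos hγ hγ'
  have hcγ : γ' * c = γ := by rw [hc_def]; field_simp [hγ'.ne']
  -- integrability of Rport β
  have hDi : Integrable (fun ω => ⟪D ω, β⟫_ℝ) P :=
    (hD.inner_const β).integrable (by norm_num)
  have hKi : ∀ j, Integrable (fun ω => |⟪K j ω, β⟫_ℝ|) P := fun j =>
    (((hK j).inner_const β).integrable (by norm_num)).abs
  have hRi : Integrable (Rport V0 ν D K β) P := by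
    have : Integrable (fun ω => ∑ j, |⟪K j ω, β⟫_ℝ|) P :=
      integrable_finset_sum _ fun j _ => hKi j
    exact ((integrable_const V0).add hDi).sub (this.const_mul ν)
  -- pointwise identity for Rport at c • β
  have hRpt : ∀ ω, Rport V0 ν D K (c • β) ω = c * Rport V0 ν D K β ω + (1 - c) * V0 := by
    intro ω
    simp only [Rport, real_inner_smul_right]
    rw [Finset.mul_sum]
    have : ∀ j : Fin q, |c * ⟪K j ω, β⟫_ℝ| = c * |⟪K j ω, β⟫_ℝ| := fun j => by
      rw [abs_mul, abs_of_pos hc]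
    simp only [this]
    rw [Finset.mul_sum]
    ring_nf
    rw [Finset.mul_sum]
    ring
  -- integral identity
  have hRint : ∫ ω, Rport V0 ν D K (c • β) ω ∂P
      = c * (∫ ω, Rport V0 ν D K β ω ∂P) + (1 - c) * V0 := by
    simp only [hRpt]
    rw [integral_add (hRi.const_mul c) (integrable_const _), integral_const_mul,
      integral_const]
    simp
  -- deviation identity
  have hdev : ∀ ω, Rport V0 ν D K (c • β) ω - (∫ ω', Rport V0 ν D K (c • β) ω' ∂P)
      = c * (Rport V0 ν D K β ω - ∫ ω', Rport V0 ν D K β ω' ∂P) := by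
    intro ω; rw [hRpt, hRint]; ring
  -- signs
  have hsign : ∀ j (ω : Ω), Real.sign ⟪K j ω, c • β⟫_ℝ = Real.sign ⟪K j ω, β⟫_ℝ := by
    intro j ω
    rw [real_inner_smul_right, sign_pos_mul _ _ hc]
  constructor
  · constructor
    · intro j
      have : {ω | ⟪K j ω, c • β⟫_ℝ = 0} = {ω | ⟪K j ω, β⟫_ℝ = 0} := by
        ext ω
        simp only [Set.mem_setOf_eq, real_inner_smul_right, mul_eq_zero]
        constructor
        · rintro (h | h)
          · exact absurd h hc.ne'
          · exact h
        · exact fun h => Or.inr h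
      rw [this]
      exact hzg.1 j
    · have heq : ∀ ω, (S0 * (1 - 2 * γ' * S0 *
          (Rport V0 ν D K (c • β) ω - ∫ ω', Rport V0 ν D K (c • β) ω' ∂P))) •
            (D ω - ν • ∑ j, Real.sign ⟪K j ω, c • β⟫_ℝ • K j ω)
          = (S0 * (1 - 2 * γ * S0 *
          (Rport V0 ν D K β ω - ∫ ω', Rport V0 ν D K β ω' ∂P))) •
            (D ω - ν • ∑ j, Real.sign ⟪K j ω, β⟫_ℝ • K j ω) := by
        intro ω
        have h1 : 2 * γ' * S0 * (Rport V0 ν D K (c • β) ω - ∫ ω', Rport V0 ν D K (c • β) ω' ∂P)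
            = 2 * γ * S0 * (Rport V0 ν D K β ω - ∫ ω', Rport V0 ν D K β ω' ∂P) := by
          rw [hdev]
          rw [← hcγ]; ring
        rw [h1]
        simp only [hsign]
      calc (∫ ω, (S0 * (1 - 2 * γ' * S0 *
            (Rport V0 ν D K (c • β) ω - ∫ ω', Rport V0 ν D K (c • β) ω' ∂P))) •
              (D ω - ν • ∑ j, Real.sign ⟪K j ω, c • β⟫_ℝ • K j ω) ∂P)
          = ∫ ω, (S0 * (1 - 2 * γ * S0 *
            (Rport V0 ν D K β ω - ∫ ω', Rport V0 ν D K β ω' ∂P))) •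
              (D ω - ν • ∑ j, Real.sign ⟪K j ω, β⟫_ℝ • K j ω) ∂P := by
            exact integral_congr_ae (Filter.Eventually.of_forall heq)
        _ = 0 := hzg.2
  · -- Sharpe ratio
    have hVpt : ∀ ω, Vport V0 S0 ν D K (c • β) ω
        = c * Vport V0 S0 ν D K β ω + (1 - c) * (V0 * S0) := by
      intro ω; simp only [Vport, hRpt]; ring
    have hVi : Integrable (Vport V0 S0 ν D K β) P := hRi.mul_const S0
    have hVint : ∫ ω, Vport V0 S0 ν D K (c • β) ω ∂P
        = c * (∫ ω, Vport V0 S0 ν D K β ω ∂P) + (1 - c) * (V0 * S0) := by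
      simp only [hVpt]
      rw [integral_add (hVi.const_mul c) (integrable_const _), integral_const_mul,
        integral_const]
      simp
    have hVvar : variance (Vport V0 S0 ν D K (c • β)) P
        = c ^ 2 * variance (Vport V0 S0 ν D K β) P := by
      have h1 : Vport V0 S0 ν D K (c • β)
          = fun ω => (c * Vport V0 S0 ν D K β ω) + (1 - c) * (V0 * S0) := funext hVpt
      rw [h1, variance_add_const' P _ (hVi.const_mul c), variance_const_mul]
    unfold sharpeRatio
    rw [hVint, hVvar]
    rw [Real.sqrt_mul (sq_nonneg c), Real.sqrt_sq hc.le]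
    rw [show c * (∫ ω, Vport V0 S0 ν D K β ω ∂P) + (1 - c) * (V0 * S0) - V0 * S0
        = c * ((∫ ω, Vport V0 S0 ν D K β ω ∂P) - V0 * S0) by ring]
    rw [mul_div_mul_left _ _ hc.ne']
end

section
/- Let 𝒱 > 0 and let β* be a γ-zero-gradient point with Var(V(β*)) > 0. Then there exist γ' > 0 and a γ'-zero-gradient point β' with Sharpe(β') = Sharpe(β*) and √Var(V(β')) = 𝒱; explicitly, β' = u·β* and γ' = γ/u with u = 𝒱/√Var(V(β*)). -/
open MeasureTheory ProbabilityTheory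
open scoped InnerProductSpace

lemma my_variance_add_const {Ω : Type*} [MeasurableSpace Ω] (P : Measure Ω)
    [IsProbabilityMeasure P] {X : Ω → ℝ} (hX : Integrable X P) (c : ℝ) :
    variance (fun ω => X ω + c) P = variance X P := by
  rw [variance, variance]
  congr 1
  rw [evariance, evariance]
  refine lintegral_congr fun ω => ?_
  rw [integral_add hX (integrable_const c), integral_const, probReal_univ]
  norm_num

lemma my_sign_mul_pos {u : ℝ} (hu : 0 < u) (x : ℝ) : Real.sign (u * x) = Real.sign x := by
  rcases lt_trichotomy x 0 with h | h | h
  · rw [Real.sign_of_neg h, Real.sign_of_neg (mul_neg_of_pos_of_neg hu h)]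
  · simp [h, Real.sign_zero]
  · rw [Real.sign_of_pos h, Real.sign_of_pos (mul_pos hu h)]

lemma Rport_memLp {Ω : Type*} [MeasurableSpace Ω] (P : Measure Ω) [IsProbabilityMeasure P]
    {m q : ℕ} (V0 ν : ℝ)
    (D : Ω → EuclideanSpace ℝ (Fin m)) (K : Fin q → Ω → EuclideanSpace ℝ (Fin m))
    (hD : MemLp D 2 P) (hK : ∀ j, MemLp (K j) 2 P) (β : EuclideanSpace ℝ (Fin m)) :
    MemLp (Rport V0 ν D K β) 2 P := by
  have h1 : MemLp (fun ω => ⟪D ω, β⟫_ℝ) 2 P := by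
    have he : (fun ω => ⟪D ω, β⟫_ℝ) = fun a => ⟪β, D a⟫_ℝ :=
      funext fun ω => real_inner_comm _ _
    rw [he]
    exact MemLp.const_inner (𝕜 := ℝ) β hD
  have h2 : MemLp (fun ω => ∑ j, |⟪K j ω, β⟫_ℝ|) 2 P := by
    have hj : ∀ j ∈ Finset.univ, MemLp (fun ω => |⟪K j ω, β⟫_ℝ|) 2 P := by
      intro j _
      have he : (fun ω => |⟪K j ω, β⟫_ℝ|) = fun a => ‖⟪β, K j a⟫_ℝ‖ :=
        funext fun ω => by rw [Real.norm_eq_abs, real_inner_comm]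
      rw [he]
      exact (MemLp.const_inner (𝕜 := ℝ) β (hK j)).norm
    have h := memLp_finsetSum' Finset.univ hj
    have he : (fun ω => ∑ j, |⟪K j ω, β⟫_ℝ|)
        = ∑ j ∈ Finset.univ, fun ω => |⟪K j ω, β⟫_ℝ| := by
      funext ω
      simp
    rw [he]
    exact h
  have : MemLp (fun ω => V0 + ⟪D ω, β⟫_ℝ - ν * ∑ j, |⟪K j ω, β⟫_ℝ|) 2 P :=
    ((memLp_const V0).add h1).sub (h2.const_mul ν)
  exact this

lemma Rport_smul {Ω : Type*} {m q : ℕ} (V0 ν : ℝ) {u : ℝ} (hu : 0 < u)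
    (D : Ω → EuclideanSpace ℝ (Fin m)) (K : Fin q → Ω → EuclideanSpace ℝ (Fin m))
    (β : EuclideanSpace ℝ (Fin m)) (ω : Ω) :
    Rport V0 ν D K (u • β) ω = u * Rport V0 ν D K β ω + (1 - u) * V0 := by
  simp only [Rport, real_inner_smul_right]
  rw [Finset.mul_sum, Finset.mul_sum]
  have : ∀ j : Fin q, |u * ⟪K j ω, β⟫_ℝ| = u * |⟪K j ω, β⟫_ℝ| := fun j => by
    rw [abs_mul, abs_of_pos hu]
  simp_rw [this]
  have h2 : ∑ j, ν * (u * |⟪K j ω, β⟫_ℝ|) = u * ∑ j, ν * |⟪K j ω, β⟫_ℝ| := by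
    rw [Finset.mul_sum]
    exact Finset.sum_congr rfl fun j _ => by ring
  rw [h2]
  ring

/-- given a target volatility `𝒱 > 0` and a `γ`-zero-gradient point `β*` with
positive variance, setting `u = 𝒱/√Var(V(β*))`, the point `β' = u·β*` is a `(γ/u)`-zero-gradient
point with the same Sharpe ratio as `β*` and volatility `√Var(V(β')) = 𝒱`. -/
theorem stmt9 {Ω : Type*} [MeasurableSpace Ω] (P : Measure Ω) [IsProbabilityMeasure P]
    {m q : ℕ} (hm : 0 < m) (hq : 0 < q)
    (V0 S0 ν : ℝ) (hV0 : 0 < V0) (hS0 : 0 < S0) (hν : 0 ≤ ν)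
    (D : Ω → EuclideanSpace ℝ (Fin m)) (K : Fin q → Ω → EuclideanSpace ℝ (Fin m))
    (hD : MemLp D 2 P) (hK : ∀ j, MemLp (K j) 2 P)
    (γ 𝒱 : ℝ) (hγ : 0 < γ) (h𝒱 : 0 < 𝒱)
    (βstar : EuclideanSpace ℝ (Fin m)) (hzg : ZeroGrad P V0 S0 ν D K γ βstar)
    (hvar : 0 < variance (Vport V0 S0 ν D K βstar) P) :
    ∃ γ' > (0 : ℝ), ∃ β' : EuclideanSpace ℝ (Fin m),
      ZeroGrad P V0 S0 ν D K γ' β' ∧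
      sharpeRatio P V0 S0 ν D K β' = sharpeRatio P V0 S0 ν D K βstar ∧
      Real.sqrt (variance (Vport V0 S0 ν D K β') P) = 𝒱 ∧
      β' = (𝒱 / Real.sqrt (variance (Vport V0 S0 ν D K βstar) P)) • βstar ∧
      γ' = γ / (𝒱 / Real.sqrt (variance (Vport V0 S0 ν D K βstar) P)) := by
  set σ := Real.sqrt (variance (Vport V0 S0 ν D K βstar) P) with hσdef
  have hσ : 0 < σ := Real.sqrt_pos.mpr hvar
  set u : ℝ := 𝒱 / σ with hudef
  have hu : 0 < u := div_pos h𝒱 hσ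
  have hRmem := Rport_memLp P V0 ν D K hD hK βstar
  have hRint : Integrable (Rport V0 ν D K βstar) P := hRmem.integrable one_le_two
  have hVint : Integrable (Vport V0 S0 ν D K βstar) P := by
    exact hRint.mul_const S0
  -- scaled R and V
  have hRscale : ∀ ω, Rport V0 ν D K (u • βstar) ω
      = u * Rport V0 ν D K βstar ω + (1 - u) * V0 :=
    Rport_smul V0 ν hu D K βstar
  have hVscale : ∀ ω, Vport V0 S0 ν D K (u • βstar) ω
      = u * Vport V0 S0 ν D K βstar ω + (1 - u) * V0 * S0 := by
    intro ω; simp only [Vport, hRscale]; ring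
  -- integral of scaled R
  have hRint' : (∫ ω, Rport V0 ν D K (u • βstar) ω ∂P)
      = u * (∫ ω, Rport V0 ν D K βstar ω ∂P) + (1 - u) * V0 := by
    simp_rw [hRscale]
    rw [integral_add (hRint.const_mul u) (integrable_const _), integral_const_mul,
      integral_const, probReal_univ]
    simp
  have hVint' : (∫ ω, Vport V0 S0 ν D K (u • βstar) ω ∂P)
      = u * (∫ ω, Vport V0 S0 ν D K βstar ω ∂P) + (1 - u) * V0 * S0 := by
    simp_rw [hVscale]
    rw [integral_add (hVint.const_mul u) (integrable_const _), integral_const_mul,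
      integral_const, probReal_univ]
    simp
  -- variance of scaled V
  have hvar' : variance (Vport V0 S0 ν D K (u • βstar)) P
      = u ^ 2 * variance (Vport V0 S0 ν D K βstar) P := by
    have h1 : Vport V0 S0 ν D K (u • βstar)
        = fun ω => (u * Vport V0 S0 ν D K βstar ω) + (1 - u) * V0 * S0 :=
      funext hVscale
    rw [h1, my_variance_add_const P (hVint.const_mul u) _, variance_const_mul]
  have hsqrtvar : Real.sqrt (variance (Vport V0 S0 ν D K (u • βstar)) P) = u * σ := by
    rw [hvar', Real.sqrt_mul (sq_nonneg u), Real.sqrt_sq hu.le, hσdef]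
  have huσ : u * σ = 𝒱 := by
    rw [hudef, div_mul_cancel₀ _ hσ.ne']
  refine ⟨γ / u, div_pos hγ hu, u • βstar, ?_, ?_, ?_, rfl, rfl⟩
  · -- ZeroGrad
    obtain ⟨hzg1, hzg2⟩ := hzg
    constructor
    · intro j
      have : {ω | ⟪K j ω, u • βstar⟫_ℝ = 0} = {ω | ⟪K j ω, βstar⟫_ℝ = 0} := by
        ext ω
        simp only [Set.mem_setOf_eq, real_inner_smul_right]
        constructor
        · intro h; rcases mul_eq_zero.mp h with h | h
          · exact absurd h hu.ne'
          · exact h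
        · intro h; rw [h, mul_zero]
      rw [this]; exact hzg1 j
    · have heq : ∀ ω,
          (S0 * (1 - 2 * (γ / u) * S0 * (Rport V0 ν D K (u • βstar) ω
            - ∫ ω', Rport V0 ν D K (u • βstar) ω' ∂P))) •
            (D ω - ν • ∑ j, Real.sign ⟪K j ω, u • βstar⟫_ℝ • K j ω)
          = (S0 * (1 - 2 * γ * S0 * (Rport V0 ν D K βstar ω
            - ∫ ω', Rport V0 ν D K βstar ω' ∂P))) •
            (D ω - ν • ∑ j, Real.sign ⟪K j ω, βstar⟫_ℝ • K j ω) := by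
        intro ω
        have hsc : ∀ j : Fin q, Real.sign ⟪K j ω, u • βstar⟫_ℝ = Real.sign ⟪K j ω, βstar⟫_ℝ := by
          intro j
          rw [real_inner_smul_right, my_sign_mul_pos hu]
        have hcen : Rport V0 ν D K (u • βstar) ω - (∫ ω', Rport V0 ν D K (u • βstar) ω' ∂P)
            = u * (Rport V0 ν D K βstar ω - ∫ ω', Rport V0 ν D K βstar ω' ∂P) := by
          rw [hRscale, hRint']; ring
        have hscal : 2 * (γ / u) * S0 * (Rport V0 ν D K (u • βstar) ω
            - ∫ ω', Rport V0 ν D K (u • βstar) ω' ∂P)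
            = 2 * γ * S0 * (Rport V0 ν D K βstar ω - ∫ ω', Rport V0 ν D K βstar ω' ∂P) := by
          rw [hcen]; field_simp
        simp_rw [hsc, hscal]
      calc (∫ ω, (S0 * (1 - 2 * (γ / u) * S0 * (Rport V0 ν D K (u • βstar) ω
            - ∫ ω', Rport V0 ν D K (u • βstar) ω' ∂P))) •
            (D ω - ν • ∑ j, Real.sign ⟪K j ω, u • βstar⟫_ℝ • K j ω) ∂P)
          = (∫ ω, (S0 * (1 - 2 * γ * S0 * (Rport V0 ν D K βstar ω
            - ∫ ω', Rport V0 ν D K βstar ω' ∂P))) •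
            (D ω - ν • ∑ j, Real.sign ⟪K j ω, βstar⟫_ℝ • K j ω) ∂P) := by
            exact integral_congr_ae (Filter.Eventually.of_forall heq)
        _ = 0 := hzg2
  · -- Sharpe
    unfold sharpeRatio
    rw [hVint', hsqrtvar, ← hσdef]
    have : u * (∫ ω, Vport V0 S0 ν D K βstar ω ∂P) + (1 - u) * V0 * S0 - V0 * S0
        = u * ((∫ ω, Vport V0 S0 ν D K βstar ω ∂P) - V0 * S0) := by ring
    rw [this, mul_div_mul_left _ _ hu.ne']
  · rw [hsqrtvar, huσ]
end
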